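/- arXiv:2406.16666 — 6 statements merged into one kernel-verified Lean document; each statement's English description precedes it below -/
import Mathlib

section
/- For any symmetric matrix A ∈ ℝ^{n×n} and a uniformly random subset S of [n] of size τ, E_S ‖A − A_[S]‖₂ ≤ sqrt(1 − p₂) ‖A‖_F, where p₂ = τ(τ−1)/(n(n−1)) and ‖·‖₂ is the spectral norm. -/
/-- Zero out the entries of the matrix `A` whose row or column index is outside `S`. -/
noncomputable def restrictM {n : ℕ} (S : Finset (Fin n)) (A : Matrix (Fin n) (Fin n) ℝ) :
    Matrix (Fin n) (Fin n) ℝ := fun i j => if i ∈ S ∧ j ∈ S then A i j else 0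

/-- The Frobenius norm of a matrix. -/
noncomputable def frobNorm {n : ℕ} (A : Matrix (Fin n) (Fin n) ℝ) : ℝ :=
  Real.sqrt (∑ i, ∑ j, (A i j) ^ 2)

/-- The spectral norm of a matrix (operator norm on Euclidean space). -/
noncomputable def specNorm {n : ℕ} (A : Matrix (Fin n) (Fin n) ℝ) : ℝ :=
  ‖Matrix.toEuclideanCLM (𝕜 := ℝ) A‖

lemma card_filter_subset_powersetCard {α : Type*} [DecidableEq α] (s t : Finset α) (k : ℕ)
    (hts : t ⊆ s) (htk : t.card ≤ k) :
    ((Finset.powersetCard k s).filter (fun S => t ⊆ S)).card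
      = Nat.choose (s.card - t.card) (k - t.card) := by
  rw [← Finset.card_sdiff_of_subset hts, ← Finset.card_powersetCard (k - t.card) (s \ t)]
  apply Finset.card_bij (fun S _ => S \ t)
  · intro S hS
    simp only [Finset.mem_filter, Finset.mem_powersetCard] at hS
    obtain ⟨⟨hSs, hSc⟩, htS⟩ := hS
    rw [Finset.mem_powersetCard]
    exact ⟨Finset.sdiff_subset_sdiff hSs (le_refl t), by rw [Finset.card_sdiff_of_subset htS, hSc]⟩
  · intro S₁ h₁ S₂ h₂ h
    simp only [Finset.mem_filter, Finset.mem_powersetCard] at h₁ h₂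
    rw [← Finset.sdiff_union_of_subset h₁.2, ← Finset.sdiff_union_of_subset h₂.2, h]
  · intro S' hS'
    rw [Finset.mem_powersetCard] at hS'
    obtain ⟨hS's, hS'c⟩ := hS'
    have hdisj : Disjoint S' t := Finset.disjoint_of_subset_left hS's Finset.sdiff_disjoint
    refine ⟨S' ∪ t, ?_, ?_⟩
    · simp only [Finset.mem_filter, Finset.mem_powersetCard]
      refine ⟨⟨Finset.union_subset (hS's.trans Finset.sdiff_subset) hts, ?_⟩,
        Finset.subset_union_right⟩
      rw [Finset.card_union_of_disjoint hdisj, hS'c, Nat.sub_add_cancel htk]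
    · rw [Finset.union_sdiff_cancel_right hdisj]

lemma nat_choose_identity (m t : ℕ) :
    (m + 2) * ((m + 1) * Nat.choose m t) = (t + 2) * ((t + 1) * Nat.choose (m + 2) (t + 2)) := by
  have h1 : (m + 1) * Nat.choose m t = Nat.choose (m + 1) (t + 1) * (t + 1) := by
    simpa [Nat.succ_eq_add_one] using Nat.add_one_mul_choose_eq m t
  have h2 : (m + 2) * Nat.choose (m + 1) (t + 1) = Nat.choose (m + 2) (t + 2) * (t + 2) := by
    simpa [Nat.succ_eq_add_one] using Nat.add_one_mul_choose_eq (m + 1) (t + 1)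
  calc (m + 2) * ((m + 1) * Nat.choose m t)
      = ((m + 2) * Nat.choose (m + 1) (t + 1)) * (t + 1) := by rw [h1]; ring
    _ = (t + 2) * ((t + 1) * Nat.choose (m + 2) (t + 2)) := by rw [h2]; ring

lemma count_bound {n τ : ℕ} (hn : 2 ≤ n) (hτ : τ ≤ n) (i j : Fin n) :
    ((τ : ℝ) * ((τ : ℝ) - 1) / ((n : ℝ) * ((n : ℝ) - 1))) * (Nat.choose n τ : ℝ)
      ≤ (((Finset.powersetCard τ (Finset.univ : Finset (Fin n))).filter
          (fun S => i ∈ S ∧ j ∈ S)).card : ℝ) := by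
  have hn1 : (0:ℝ) < (n : ℝ) * ((n : ℝ) - 1) := by
    have : (2:ℝ) ≤ (n:ℝ) := by exact_mod_cast hn
    nlinarith
  rw [div_mul_eq_mul_div, div_le_iff₀ hn1]
  have hcast : ((n:ℝ) - 1) = (((n - 1 : ℕ)):ℝ) := by
    push_cast [Nat.cast_sub (by omega : 1 ≤ n)]; ring
  match τ, hτ with
  | 0, _ => simp; positivity
  | 1, _ => simp; positivity
  | (t+2), hτ => ?_
  have hpred : ∀ S : Finset (Fin n), (i ∈ S ∧ j ∈ S) ↔ ({i, j} : Finset (Fin n)) ⊆ S := by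
    intro S; simp [Finset.insert_subset_iff]
  rw [Finset.filter_congr (fun S _ => by rw [hpred S])]
  by_cases hij : i = j
  · subst hij
    have hsingle : ({i, i} : Finset (Fin n)) = {i} := by simp
    rw [Finset.filter_congr (fun S _ => by rw [hsingle])]
    rw [card_filter_subset_powersetCard _ _ _ (by simp) (by simp)]
    rw [Finset.card_univ, Fintype.card_fin, Finset.card_singleton]
    have hid : n * Nat.choose (n - 1) (t + 1) = Nat.choose n (t + 2) * (t + 2) := by
      obtain ⟨m, rfl⟩ : ∃ m, n = m + 1 := ⟨n - 1, by omega⟩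
      simpa [Nat.succ_eq_add_one] using Nat.add_one_mul_choose_eq m (t + 1)
    have hineq : (t + 2) * ((t + 1) * Nat.choose n (t + 2))
        ≤ Nat.choose (n - 1) (t + 1) * (n * (n - 1)) := by
      calc (t + 2) * ((t + 1) * Nat.choose n (t + 2))
          = (t + 1) * (Nat.choose n (t + 2) * (t + 2)) := by ring
        _ = (t + 1) * (n * Nat.choose (n - 1) (t + 1)) := by rw [hid]
        _ ≤ (n - 1) * (n * Nat.choose (n - 1) (t + 1)) := by
            apply Nat.mul_le_mul_right; omega
        _ = Nat.choose (n - 1) (t + 1) * (n * (n - 1)) := by ring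
    have hR := (Nat.cast_le (α := ℝ)).mpr hineq
    push_cast at hR
    rw [hcast]
    push_cast
    nlinarith [hR]
  · have hcard : ({i, j} : Finset (Fin n)).card = 2 := Finset.card_pair hij
    rw [card_filter_subset_powersetCard _ _ _ (by simp) (by omega)]
    rw [Finset.card_univ, Fintype.card_fin, hcard]
    have hid : n * ((n - 1) * Nat.choose (n - 2) t)
        = (t + 2) * ((t + 1) * Nat.choose n (t + 2)) := by
      obtain ⟨m, rfl⟩ : ∃ m, n = m + 2 := ⟨n - 2, by omega⟩
      simpa using nat_choose_identity m t
    have hR := congrArg (fun x : ℕ => (x : ℝ)) hid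
    push_cast at hR
    rw [hcast]
    push_cast
    nlinarith [hR]

lemma specNorm_le_frobNorm {n : ℕ} (A : Matrix (Fin n) (Fin n) ℝ) :
    specNorm A ≤ frobNorm A := by
  apply ContinuousLinearMap.opNorm_le_bound _ (Real.sqrt_nonneg _)
  intro x
  have hx : ∀ k, (Matrix.toEuclideanCLM (𝕜 := ℝ) A x) k = ∑ j, A k j * x j := by
    intro k
    have := Matrix.ofLp_toEuclideanCLM (𝕜 := ℝ) A x
    have h2 := congrFun this k
    simpa [Matrix.mulVec, dotProduct] using h2
  rw [EuclideanSpace.norm_eq, EuclideanSpace.norm_eq]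
  have key : ∑ k, ‖(Matrix.toEuclideanCLM (𝕜 := ℝ) A x) k‖ ^ 2
      ≤ (∑ i, ∑ j, (A i j) ^ 2) * (∑ j, ‖x j‖ ^ 2) := by
    rw [Finset.sum_mul]
    apply Finset.sum_le_sum
    intro k _
    rw [hx k, Real.norm_eq_abs, sq_abs]
    calc (∑ j, A k j * x j) ^ 2 ≤ (∑ j, (A k j) ^ 2) * (∑ j, (x j) ^ 2) :=
          Finset.sum_mul_sq_le_sq_mul_sq _ _ _
      _ = (∑ j, (A k j) ^ 2) * (∑ j, ‖x j‖ ^ 2) := by simp [Real.norm_eq_abs, sq_abs]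
  calc Real.sqrt (∑ k, ‖(Matrix.toEuclideanCLM (𝕜 := ℝ) A x) k‖ ^ 2)
      ≤ Real.sqrt ((∑ i, ∑ j, (A i j) ^ 2) * (∑ j, ‖x j‖ ^ 2)) := Real.sqrt_le_sqrt key
    _ = frobNorm A * Real.sqrt (∑ j, ‖x j‖ ^ 2) := by
        rw [Real.sqrt_mul (by positivity)]; rfl

/-- For a symmetric matrix `A` and a uniformly random subset `S ⊆ [n]` of size `τ`,
`E_S ‖A − A_[S]‖₂ ≤ sqrt(1 − p₂) ‖A‖_F` with `p₂ = τ(τ−1)/(n(n−1))`. -/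
theorem expectation_spec_norm_hessian_restrict_le {n τ : ℕ} (hn : 2 ≤ n) (hτ : τ ≤ n)
    (A : Matrix (Fin n) (Fin n) ℝ) (hA : A.IsSymm) :
    (∑ S ∈ Finset.powersetCard τ (Finset.univ : Finset (Fin n)), specNorm (A - restrictM S A)) /
        ((Finset.powersetCard τ (Finset.univ : Finset (Fin n))).card : ℝ)
      ≤ Real.sqrt (1 - (τ : ℝ) * (τ - 1) / ((n : ℝ) * (n - 1))) * frobNorm A := by
  classical
  set P := Finset.powersetCard τ (Finset.univ : Finset (Fin n)) with hP
  set p : ℝ := (τ : ℝ) * ((τ : ℝ) - 1) / ((n : ℝ) * ((n : ℝ) - 1)) with hp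
  have hNcard : P.card = Nat.choose n τ := by
    rw [hP, Finset.card_powersetCard, Finset.card_univ, Fintype.card_fin]
  have hNpos : 0 < P.card := by rw [hNcard]; exact Nat.choose_pos hτ
  have hNposR : (0:ℝ) < (P.card : ℝ) := by exact_mod_cast hNpos
  -- p ≤ 1 and 0 ≤ p bounds
  have hnR : (2:ℝ) ≤ (n:ℝ) := by exact_mod_cast hn
  have hτR : (τ:ℝ) ≤ (n:ℝ) := by exact_mod_cast hτ
  have hdenpos : (0:ℝ) < (n:ℝ) * ((n:ℝ) - 1) := by nlinarith
  have hp1 : p ≤ 1 := by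
    rw [hp, div_le_one hdenpos]
    rcases Nat.eq_zero_or_pos τ with h0 | h1
    · subst h0; simp; nlinarith
    · have : (1:ℝ) ≤ (τ:ℝ) := by exact_mod_cast h1
      nlinarith
  have h1p : 0 ≤ 1 - p := by linarith
  -- Frobenius norm squared sum bound
  set F2 : ℝ := ∑ i, ∑ j, (A i j) ^ 2 with hF2
  have hF2nonneg : 0 ≤ F2 := by positivity
  have key : ∑ S ∈ P, (∑ i, ∑ j, ((A - restrictM S A) i j) ^ 2) ≤ (1 - p) * P.card * F2 := by
    have hentry : ∀ S : Finset (Fin n), ∀ i j, ((A - restrictM S A) i j) ^ 2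
        = (A i j) ^ 2 - (if i ∈ S ∧ j ∈ S then (A i j) ^ 2 else 0) := by
      intro S i j
      simp only [Matrix.sub_apply, restrictM]
      by_cases h : i ∈ S ∧ j ∈ S <;> simp [h]
    calc ∑ S ∈ P, (∑ i, ∑ j, ((A - restrictM S A) i j) ^ 2)
        = ∑ i, ∑ j, ∑ S ∈ P, ((A i j) ^ 2 - (if i ∈ S ∧ j ∈ S then (A i j) ^ 2 else 0)) := by
          simp_rw [hentry]
          rw [Finset.sum_comm]
          congr 1; ext i
          rw [Finset.sum_comm]
      _ = ∑ i, ∑ j, ((P.card : ℝ) * (A i j) ^ 2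
            - ((P.filter (fun S => i ∈ S ∧ j ∈ S)).card : ℝ) * (A i j) ^ 2) := by
          congr 1; ext i; congr 1; ext j
          rw [Finset.sum_sub_distrib, Finset.sum_const, ← Finset.sum_filter,
            Finset.sum_const]
          simp [nsmul_eq_mul]
      _ ≤ ∑ i, ∑ j, ((P.card : ℝ) * (A i j) ^ 2 - p * (P.card : ℝ) * (A i j) ^ 2) := by
          apply Finset.sum_le_sum; intro i _
          apply Finset.sum_le_sum; intro j _
          have hc := count_bound hn hτ i j
          rw [← hNcard] at hc
          have hsq : (0:ℝ) ≤ (A i j) ^ 2 := sq_nonneg _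
          nlinarith [hc, hsq]
      _ = (1 - p) * P.card * F2 := by
          rw [hF2, Finset.mul_sum]; congr 1; ext i
          rw [Finset.mul_sum]; congr 1; ext j; ring
  -- Frobenius norms: sum of sqrt ≤ sqrt (card * sum)
  have step2 : ∑ S ∈ P, frobNorm (A - restrictM S A)
      ≤ Real.sqrt ((P.card : ℝ) * ((1 - p) * P.card * F2)) := by
    have hCS : (∑ S ∈ P, frobNorm (A - restrictM S A)) ^ 2
        ≤ (P.card : ℝ) * ∑ S ∈ P, (frobNorm (A - restrictM S A)) ^ 2 := by
      simpa using sq_sum_le_card_mul_sum_sq (s := P)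
        (f := fun S => frobNorm (A - restrictM S A))
    have hfrobsq : ∀ S : Finset (Fin n), (frobNorm (A - restrictM S A)) ^ 2
        = ∑ i, ∑ j, ((A - restrictM S A) i j) ^ 2 := by
      intro S
      rw [frobNorm, Real.sq_sqrt (by positivity)]
    rw [show (∑ S ∈ P, (frobNorm (A - restrictM S A)) ^ 2)
        = ∑ S ∈ P, (∑ i, ∑ j, ((A - restrictM S A) i j) ^ 2) from
          Finset.sum_congr rfl (fun S _ => hfrobsq S)] at hCS
    have hnn : 0 ≤ ∑ S ∈ P, frobNorm (A - restrictM S A) :=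
      Finset.sum_nonneg (fun S _ => Real.sqrt_nonneg _)
    have : (∑ S ∈ P, frobNorm (A - restrictM S A)) ^ 2
        ≤ (P.card : ℝ) * ((1 - p) * P.card * F2) := by
      refine hCS.trans ?_
      exact mul_le_mul_of_nonneg_left key (by positivity)
    calc ∑ S ∈ P, frobNorm (A - restrictM S A)
        = Real.sqrt ((∑ S ∈ P, frobNorm (A - restrictM S A)) ^ 2) := by
          rw [Real.sqrt_sq hnn]
      _ ≤ Real.sqrt ((P.card : ℝ) * ((1 - p) * P.card * F2)) := Real.sqrt_le_sqrt this
  -- combine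
  have step1 : ∑ S ∈ P, specNorm (A - restrictM S A) ≤ ∑ S ∈ P, frobNorm (A - restrictM S A) :=
    Finset.sum_le_sum (fun S _ => specNorm_le_frobNorm _)
  have hsqrtval : Real.sqrt ((P.card : ℝ) * ((1 - p) * P.card * F2))
      = (P.card : ℝ) * (Real.sqrt (1 - p) * frobNorm A) := by
    rw [show (P.card : ℝ) * ((1 - p) * P.card * F2)
        = ((P.card : ℝ) * (P.card : ℝ)) * ((1 - p) * F2) by ring]
    rw [Real.sqrt_mul (by positivity), Real.sqrt_mul_self hNposR.le,
      Real.sqrt_mul h1p, frobNorm]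
  rw [div_le_iff₀ hNposR]
  calc ∑ S ∈ P, specNorm (A - restrictM S A)
      ≤ Real.sqrt ((P.card : ℝ) * ((1 - p) * P.card * F2)) := step1.trans step2
    _ = Real.sqrt (1 - p) * frobNorm A * (P.card : ℝ) := by rw [hsqrtval]; ring
end

section
/- Let Q ∈ ℝ^{n×n} be symmetric, g ∈ ℝ^n, M > 0, and let h* be a global minimizer over ℝ^n of m(h) = ⟨g, h⟩ + (1/2)⟨Q h, h⟩ + (M/6)‖h‖³. Then Q + (M/2)‖h*‖ · I ⪰ 0. -/
open scoped RealInnerProductSpace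

private lemma cubic_lin_aux (a c : ℝ) (h : ∀ ε : ℝ, 0 < ε → 0 ≤ a * ε + c) : 0 ≤ c := by
  have hc : Continuous (fun ε : ℝ => a * ε + c) := by continuity
  have ht : Filter.Tendsto (fun ε : ℝ => a * ε + c) (nhdsWithin 0 (Set.Ioi 0)) (nhds c) := by
    have := hc.tendsto (0 : ℝ)
    simp only [mul_zero, zero_add] at this
    exact this.mono_left nhdsWithin_le_nhds
  refine ge_of_tendsto ht ?_
  filter_upwards [self_mem_nhdsWithin] with ε hε
  exact h ε hε

private lemma cubic_quad_aux (a b c : ℝ) (h : ∀ ε : ℝ, ε ≠ 0 → 0 ≤ a * ε ^ 2 + b * ε + c) :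
    0 ≤ c := by
  apply cubic_lin_aux a
  intro ε hε
  have hsne : Real.sqrt ε ≠ 0 := by positivity
  have h1 := h (Real.sqrt ε) hsne
  have h2 := h (-Real.sqrt ε) (by simpa using hsne)
  have h3 : Real.sqrt ε ^ 2 = ε := Real.sq_sqrt hε.le
  simp only [neg_sq] at h2
  rw [h3] at h1 h2
  linarith

/-- If `h*` is a global minimizer of the cubic model
`m(h) = ⟨g,h⟩ + ½⟨Qh,h⟩ + (M/6)‖h‖³`, then `Q + (M/2)‖h*‖ I ⪰ 0`. -/
theorem cubic_model_global_min_psd {n : ℕ} (Q : Matrix (Fin n) (Fin n) ℝ) (hQ : Q.IsSymm)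
    (g hs : EuclideanSpace ℝ (Fin n)) (M : ℝ) (hM : 0 < M)
    (hmin : ∀ h : EuclideanSpace ℝ (Fin n),
      ⟪g, hs⟫ + (1 / 2) * ⟪(Matrix.toEuclideanCLM (𝕜 := ℝ) Q) hs, hs⟫ + (M / 6) * ‖hs‖ ^ 3
        ≤ ⟪g, h⟫ + (1 / 2) * ⟪(Matrix.toEuclideanCLM (𝕜 := ℝ) Q) h, h⟫ + (M / 6) * ‖h‖ ^ 3) :
    (Q + ((M / 2) * ‖hs‖) • (1 : Matrix (Fin n) (Fin n) ℝ)).PosSemidef := by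
  set A := Matrix.toEuclideanCLM (𝕜 := ℝ) Q with hAdef
  have hH : Q.IsHermitian := by
    rw [Matrix.IsHermitian, Matrix.conjTranspose_eq_transpose_of_trivial]; exact hQ
  have hsym : ∀ x y : EuclideanSpace ℝ (Fin n), ⟪A x, y⟫ = ⟪x, A y⟫ := by
    intro x y
    have := (Matrix.isHermitian_iff_isSymmetric.mp hH) x y
    simpa [hAdef, ← Matrix.coe_toEuclideanCLM_eq_toEuclideanLin] using this
  -- the key quadratic-form inequality
  have key : ∀ w : EuclideanSpace ℝ (Fin n),
      0 ≤ ⟪A w, w⟫ + (M / 2) * ‖hs‖ * ‖w‖ ^ 2 := by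
    by_cases h0 : hs = 0
    · -- degenerate case: the minimizer is 0
      intro w
      subst h0
      simp only [norm_zero, mul_zero, zero_mul, add_zero]
      have hq : 0 ≤ ⟪A w, w⟫ := by
        apply cubic_lin_aux ((M / 3) * ‖w‖ ^ 3)
        intro ε hε
        have h1 := hmin (ε • w)
        have h2 := hmin ((-ε) • w)
        simp only [inner_zero_right, map_zero, inner_zero_left, norm_zero, mul_zero, add_zero,
          zero_add, map_smul, real_inner_smul_left, real_inner_smul_right, norm_smul,
          zero_pow, smul_smul] at h1 h2
        have habs : |ε| = ε := abs_of_pos hε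
        have habs' : |(-ε)| = ε := by rw [abs_neg, habs]
        rw [Real.norm_eq_abs, habs] at h1
        rw [Real.norm_eq_abs, habs'] at h2
        nlinarith [mul_pos hε hε, mul_pos (mul_pos hε hε) hε]
      linarith
    · have hns : ‖hs‖ ≠ 0 := norm_ne_zero_iff.mpr h0
      have hnpos : 0 < ‖hs‖ := norm_pos_iff.mpr h0
      -- first-order optimality condition
      have foc : ∀ v : EuclideanSpace ℝ (Fin n),
          ⟪g, v⟫ + ⟪A hs, v⟫ + (M / 2) * ‖hs‖ * ⟪hs, v⟫ = 0 := by
        intro v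
        set p : ℝ → ℝ := fun t => ‖hs‖ ^ 2 + (2 * ⟪hs, v⟫) * t + ‖v‖ ^ 2 * t ^ 2 with hpdef
        have hp0 : p 0 = ‖hs‖ ^ 2 := by simp [hpdef]
        have hp0ne : p 0 ≠ 0 := by rw [hp0]; positivity
        have hsqrt0 : Real.sqrt (p 0) = ‖hs‖ := by rw [hp0, Real.sqrt_sq (norm_nonneg _)]
        have hp : HasDerivAt p (2 * ⟪hs, v⟫) 0 := by
          have h1 : HasDerivAt (fun t : ℝ => (2 * ⟪hs, v⟫) * t) (2 * ⟪hs, v⟫) 0 := by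
            simpa using (hasDerivAt_id (0:ℝ)).const_mul (2 * ⟪hs, v⟫)
          have h2 : HasDerivAt (fun t : ℝ => ‖v‖ ^ 2 * t ^ 2) 0 0 := by
            simpa using (hasDerivAt_pow 2 (0:ℝ)).const_mul (‖v‖ ^ 2)
          have := (h1.add h2).const_add (‖hs‖ ^ 2)
          simpa [hpdef, add_assoc] using this
        have hsq : HasDerivAt (fun t => Real.sqrt (p t)) ((2 * ⟪hs, v⟫) / (2 * ‖hs‖)) 0 := by
          have := hp.sqrt hp0ne
          rwa [hsqrt0] at this
        have hcube : HasDerivAt (fun t => (M / 6) * (p t * Real.sqrt (p t)))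
            ((M / 2) * ‖hs‖ * ⟪hs, v⟫) 0 := by
          have := (hp.mul hsq).const_mul (M / 6)
          rw [hsqrt0, hp0] at this
          convert this using 1
          · rfl
          · rfl
          · funext t; rfl
          field_simp
          ring
        have hd1 : HasDerivAt (fun t : ℝ => ⟪g, hs⟫ + ⟪g, v⟫ * t) ⟪g, v⟫ 0 := by
          simpa using ((hasDerivAt_id (0:ℝ)).const_mul ⟪g, v⟫).const_add ⟪g, hs⟫
        have hd2 : HasDerivAt (fun t : ℝ =>
            (1 / 2) * (⟪A hs, hs⟫ + (2 * ⟪A hs, v⟫) * t + ⟪A v, v⟫ * t ^ 2)) ⟪A hs, v⟫ 0 := by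
          have h1 : HasDerivAt (fun t : ℝ => (2 * ⟪A hs, v⟫) * t) (2 * ⟪A hs, v⟫) 0 := by
            simpa using (hasDerivAt_id (0:ℝ)).const_mul (2 * ⟪A hs, v⟫)
          have h2 : HasDerivAt (fun t : ℝ => ⟪A v, v⟫ * t ^ 2) 0 0 := by
            simpa using (hasDerivAt_pow 2 (0:ℝ)).const_mul ⟪A v, v⟫
          have := (((h1.add h2).const_add ⟪A hs, hs⟫).const_mul (1/2 : ℝ))
          convert this using 1
          · rfl
          · rfl
          · funext t; simp only [Pi.add_apply]; ring
          · ring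
        have hφ : HasDerivAt (fun t : ℝ =>
            (⟪g, hs⟫ + ⟪g, v⟫ * t)
            + (1 / 2) * (⟪A hs, hs⟫ + (2 * ⟪A hs, v⟫) * t + ⟪A v, v⟫ * t ^ 2)
            + (M / 6) * (p t * Real.sqrt (p t)))
            (⟪g, v⟫ + ⟪A hs, v⟫ + (M / 2) * ‖hs‖ * ⟪hs, v⟫) 0 :=
          (hd1.add hd2).add hcube
        have hAc : ⟪A v, hs⟫ = ⟪A hs, v⟫ := by rw [hsym v hs, real_inner_comm]
        have heq : ∀ t : ℝ,
            ⟪g, hs + t • v⟫ + (1 / 2) * ⟪A (hs + t • v), hs + t • v⟫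
              + (M / 6) * ‖hs + t • v‖ ^ 3
            = (⟪g, hs⟫ + ⟪g, v⟫ * t)
              + (1 / 2) * (⟪A hs, hs⟫ + (2 * ⟪A hs, v⟫) * t + ⟪A v, v⟫ * t ^ 2)
              + (M / 6) * (p t * Real.sqrt (p t)) := by
          intro t
          have e1 : ⟪g, hs + t • v⟫ = ⟪g, hs⟫ + ⟪g, v⟫ * t := by
            rw [inner_add_right, real_inner_smul_right]; ring
          have e2 : ⟪A (hs + t • v), hs + t • v⟫
              = ⟪A hs, hs⟫ + (2 * ⟪A hs, v⟫) * t + ⟪A v, v⟫ * t ^ 2 := by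
            rw [map_add, map_smul, inner_add_left, inner_add_right, inner_add_right,
              real_inner_smul_left, real_inner_smul_right, real_inner_smul_left,
              real_inner_smul_right, hAc]
            ring
          have e3 : ‖hs + t • v‖ ^ 2 = p t := by
            rw [norm_add_sq_real, norm_smul, real_inner_smul_right, hpdef]
            simp [mul_pow]
            ring
          have e4 : ‖hs + t • v‖ ^ 3 = p t * Real.sqrt (p t) := by
            rw [show ‖hs + t • v‖ ^ 3 = ‖hs + t • v‖ ^ 2 * Real.sqrt (‖hs + t • v‖ ^ 2) by
              rw [Real.sqrt_sq (norm_nonneg _)]; ring, e3]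
          rw [e1, e2, e4]
        have hloc : IsLocalMin (fun t : ℝ =>
            (⟪g, hs⟫ + ⟪g, v⟫ * t)
            + (1 / 2) * (⟪A hs, hs⟫ + (2 * ⟪A hs, v⟫) * t + ⟪A v, v⟫ * t ^ 2)
            + (M / 6) * (p t * Real.sqrt (p t))) 0 := by
          apply Filter.Eventually.of_forall
          intro t
          beta_reduce
          rw [← heq t, ← heq 0]
          simpa using hmin (hs + t • v)
        exact hloc.hasDerivAt_eq_zero hφ
      -- the model does not decrease on the sphere of radius ‖hs‖
      have sph : ∀ u : EuclideanSpace ℝ (Fin n), ‖u‖ = ‖hs‖ →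
          0 ≤ ⟪A (u - hs), u - hs⟫ + (M / 2) * ‖hs‖ * ‖u - hs‖ ^ 2 := by
        intro u hu
        set d := u - hs with hd
        have hud : u = hs + d := by rw [hd]; abel
        have h1 := hmin u
        have e1 : ⟪g, u⟫ = ⟪g, hs⟫ + ⟪g, d⟫ := by rw [hud, inner_add_right]
        have hAc : ⟪A d, hs⟫ = ⟪A hs, d⟫ := by rw [hsym d hs, real_inner_comm]
        have e2 : ⟪A u, u⟫ = ⟪A hs, hs⟫ + 2 * ⟪A hs, d⟫ + ⟪A d, d⟫ := by
          rw [hud, map_add, inner_add_left, inner_add_right, inner_add_right, hAc]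
          ring
        have e3 : ‖u‖ ^ 3 = ‖hs‖ ^ 3 := by rw [hu]
        rw [e1, e2, e3] at h1
        have h2 : 0 ≤ ⟪g, d⟫ + ⟪A hs, d⟫ + (1 / 2) * ⟪A d, d⟫ := by linarith
        have hfoc := foc d
        have e4 : ‖d‖ ^ 2 = 2 * ‖hs‖ ^ 2 - 2 * ⟪hs, u⟫ := by
          rw [hd, norm_sub_sq_real, hu, real_inner_comm]
          ring
        have e5 : ⟪hs, d⟫ = ⟪hs, u⟫ - ‖hs‖ ^ 2 := by
          rw [hd, inner_sub_right, real_inner_self_eq_norm_sq]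
        have e6 : ⟪hs, d⟫ = -(1 / 2) * ‖d‖ ^ 2 := by rw [e5]; linarith
        rw [e6] at hfoc
        linarith
      -- nonnegativity on directions not orthogonal to hs
      have key' : ∀ w : EuclideanSpace ℝ (Fin n), ⟪w, hs⟫ ≠ 0 →
          0 ≤ ⟪A w, w⟫ + (M / 2) * ‖hs‖ * ‖w‖ ^ 2 := by
        intro w hw0
        have hwne : w ≠ 0 := by
          intro h; apply hw0; rw [h, inner_zero_left]
        have hwn : (0:ℝ) < ‖w‖ ^ 2 := pow_pos (norm_pos_iff.mpr hwne) 2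
        set α : ℝ := -2 * ⟪w, hs⟫ / ‖w‖ ^ 2 with hα
        have hαne : α ≠ 0 := by
          rw [hα]
          exact div_ne_zero (by simpa using hw0) (ne_of_gt hwn)
        have hαsq : 0 < α ^ 2 := by
          have h' := abs_pos.mpr hαne
          nlinarith [sq_abs α, h']
        have hu : ‖hs + α • w‖ = ‖hs‖ := by
          have hsq : ‖hs + α • w‖ ^ 2 = ‖hs‖ ^ 2 := by
            rw [norm_add_sq_real, norm_smul, real_inner_smul_right, mul_pow,
              Real.norm_eq_abs, sq_abs]
            have hαw : α * ‖w‖ ^ 2 = -2 * ⟪w, hs⟫ := by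
              rw [hα]; field_simp
            have hcomm : ⟪hs, w⟫ = ⟪w, hs⟫ := real_inner_comm _ _
            linear_combination α * hαw + 2 * α * hcomm
          have := congrArg Real.sqrt hsq
          rwa [Real.sqrt_sq (norm_nonneg _), Real.sqrt_sq (norm_nonneg _)] at this
        have hq := sph (hs + α • w) hu
        have hsubst : hs + α • w - hs = α • w := by abel
        rw [hsubst] at hq
        rw [map_smul, real_inner_smul_left, real_inner_smul_right, norm_smul, mul_pow,
          Real.norm_eq_abs, sq_abs] at hq
        nlinarith [hq, hαsq]
      -- general case via perturbation
      intro w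
      by_cases hw : ⟪w, hs⟫ = 0
      · apply cubic_quad_aux (⟪A hs, hs⟫ + (M / 2) * ‖hs‖ * ‖hs‖ ^ 2) (2 * ⟪A hs, w⟫)
        intro ε hε
        have hne : ⟪w + ε • hs, hs⟫ ≠ 0 := by
          rw [inner_add_left, real_inner_smul_left, hw, zero_add,
            real_inner_self_eq_norm_sq]
          exact mul_ne_zero hε (by positivity)
        have hq := key' (w + ε • hs) hne
        have hAc : ⟪A hs, w⟫ = ⟪A w, hs⟫ := by
          rw [hsym hs w, real_inner_comm]
        have e1 : ⟪A (w + ε • hs), w + ε • hs⟫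
            = ⟪A w, w⟫ + ε * (2 * ⟪A hs, w⟫) + ε ^ 2 * ⟪A hs, hs⟫ := by
          rw [map_add, map_smul, inner_add_left, inner_add_right, inner_add_right,
            real_inner_smul_left, real_inner_smul_right, real_inner_smul_left,
            real_inner_smul_right, hAc]
          ring
        have e2 : ‖w + ε • hs‖ ^ 2 = ‖w‖ ^ 2 + ε ^ 2 * ‖hs‖ ^ 2 := by
          rw [norm_add_sq_real, norm_smul, real_inner_smul_right, hw, mul_pow,
            Real.norm_eq_abs, sq_abs]
          ring
        rw [e1, e2] at hq
        linarith [hq]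
      · exact key' w hw
  -- convert the quadratic-form inequality into matrix positive semidefiniteness
  refine Matrix.PosSemidef.of_dotProduct_mulVec_nonneg ?_ ?_
  · simp only [Matrix.IsHermitian, Matrix.conjTranspose_add, Matrix.conjTranspose_smul, hH.eq,
      star_trivial, Matrix.conjTranspose_one]
  · intro x
    have hinner : ∀ a b : Fin n → ℝ, ⟪(WithLp.equiv 2 (Fin n → ℝ)).symm a,
        (WithLp.equiv 2 (Fin n → ℝ)).symm b⟫ = dotProduct (star a) b :=
      fun a b => (dotProduct_comm _ _).symm
    have hk := key ((WithLp.equiv 2 (Fin n → ℝ)).symm x)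
    have h1 : A ((WithLp.equiv 2 (Fin n → ℝ)).symm x)
        = (WithLp.equiv 2 (Fin n → ℝ)).symm (Matrix.mulVec Q x) := by
      rw [hAdef]; rfl
    rw [h1, hinner] at hk
    have h2 : ‖(WithLp.equiv 2 (Fin n → ℝ)).symm x‖ ^ 2 = dotProduct (star x) x := by
      rw [← real_inner_self_eq_norm_sq, hinner]
    rw [h2] at hk
    have h3 : dotProduct (star x)
          (Matrix.mulVec (Q + ((M / 2) * ‖hs‖) • (1 : Matrix (Fin n) (Fin n) ℝ)) x)
        = dotProduct (star (Matrix.mulVec Q x)) x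
          + (M / 2) * ‖hs‖ * dotProduct (star x) x := by
      rw [Matrix.add_mulVec, dotProduct_add, Matrix.smul_mulVec,
        Matrix.one_mulVec]
      simp only [star_trivial, dotProduct_smul, smul_eq_mul]
      rw [dotProduct_comm (Matrix.mulVec Q x) x]
    rw [h3]
    exact hk
end

section
/- Let Q ∈ ℝ^{n×n} be symmetric, g ∈ ℝ^n, M > 0, and let h* be a global minimizer of m(h) = ⟨g, h⟩ + (1/2)⟨Q h, h⟩ + (M/6)‖h‖³ over ℝ^n. Then ⟨g, h*⟩ ≤ 0. -/
open scoped RealInnerProductSpace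

/-- If `h*` is a global minimizer of the cubic model
`m(h) = ⟨g,h⟩ + ½⟨Qh,h⟩ + (M/6)‖h‖³`, then `⟨g, h*⟩ ≤ 0`. -/
theorem cubic_model_global_min_inner_nonpos {n : ℕ} (Q : Matrix (Fin n) (Fin n) ℝ)
    (hQ : Q.IsSymm) (g hs : EuclideanSpace ℝ (Fin n)) (M : ℝ) (hM : 0 < M)
    (hmin : ∀ h : EuclideanSpace ℝ (Fin n),
      ⟪g, hs⟫ + (1 / 2) * ⟪(Matrix.toEuclideanCLM (𝕜 := ℝ) Q) hs, hs⟫ + (M / 6) * ‖hs‖ ^ 3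
        ≤ ⟪g, h⟫ + (1 / 2) * ⟪(Matrix.toEuclideanCLM (𝕜 := ℝ) Q) h, h⟫ + (M / 6) * ‖h‖ ^ 3) :
    ⟪g, hs⟫ ≤ 0 := by
  have h := hmin (-hs)
  simp only [inner_neg_neg, inner_neg_left, inner_neg_right, neg_neg, map_neg, norm_neg] at h
  linarith
end

section
/- Let f: ℝ^n → ℝ be twice differentiable with L₂-Lipschitz Hessian, x ∈ ℝ^n, M ≥ L₂, and let h* be a global minimizer of the model m(h) = f(x) + ⟨∇f(x)_[S], h⟩ + (1/2)⟨∇²f(x)_[S] h, h⟩ + (M/6)‖h_[S]‖³ over vectors h supported on a coordinate set S ⊆ [n]. Then f(x) − f(x + h*) ≥ (M/12) ‖h*‖³. -/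
open scoped RealInnerProductSpace



open Set in
lemma taylor_cubic_bound {n : ℕ} (f : EuclideanSpace ℝ (Fin n) → ℝ) (L₂ : ℝ) (hL₂ : 0 ≤ L₂)
    (hf : ContDiff ℝ 2 f)
    (hLip : ∀ x y : EuclideanSpace ℝ (Fin n),
      ‖fderiv ℝ (fun z => fderiv ℝ f z) x - fderiv ℝ (fun z => fderiv ℝ f z) y‖ ≤ L₂ * ‖x - y‖)
    (x h : EuclideanSpace ℝ (Fin n)) :
    f (x + h) ≤ f x + fderiv ℝ f x h
      + (1/2) * ((fderiv ℝ (fun z => fderiv ℝ f z) x h) h) + (L₂/6) * ‖h‖^3 := by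
  have hdf : Differentiable ℝ f := hf.differentiable (by norm_num)
  have hdf' : Differentiable ℝ (fderiv ℝ f) :=
    (hf.fderiv_right (by norm_num : (1:WithTop ℕ∞) + 1 ≤ 2)).differentiable (by norm_num)
  set K := L₂ * ‖h‖ ^ 3 with hK
  have hK0 : 0 ≤ K := by positivity
  set g : ℝ → ℝ := fun t => f (x + t • h) with hg_def
  set g1 : ℝ → ℝ := fun t => fderiv ℝ f (x + t • h) h with hg1_def
  set g2 : ℝ → ℝ := fun t => (fderiv ℝ (fun z => fderiv ℝ f z) (x + t • h) h) h with hg2_def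
  have hp : ∀ t : ℝ, HasDerivAt (fun t : ℝ => x + t • h) h t := by
    intro t
    simpa using ((hasDerivAt_id t).smul_const h).const_add x
  have hg : ∀ t : ℝ, HasDerivAt g (g1 t) t := fun t =>
    (hdf.differentiableAt.hasFDerivAt).comp_hasDerivAt t (hp t)
  have hg1 : ∀ t : ℝ, HasDerivAt g1 (g2 t) t := by
    intro t
    have h1 : HasFDerivAt (fderiv ℝ f) (fderiv ℝ (fun z => fderiv ℝ f z) (x + t • h)) (x + t • h) :=
      (hdf'.differentiableAt).hasFDerivAt
    have h2 := h1.comp_hasDerivAt t (hp t)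
    have h3 := (ContinuousLinearMap.apply ℝ ℝ h).hasFDerivAt.comp_hasDerivAt t h2
    exact h3
  have key : ∀ t ∈ Icc (0:ℝ) 1, ‖g2 t - g2 0‖ ≤ K * t := by
    intro t ht
    have hAB : g2 t - g2 0
        = (((fderiv ℝ (fun z => fderiv ℝ f z) (x + t • h))
            - (fderiv ℝ (fun z => fderiv ℝ f z) (x + (0:ℝ) • h))) h) h := by
      simp [hg2_def, ContinuousLinearMap.sub_apply]
    rw [hAB]
    set A := (fderiv ℝ (fun z => fderiv ℝ f z) (x + t • h))
            - (fderiv ℝ (fun z => fderiv ℝ f z) (x + (0:ℝ) • h)) with hA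
    calc ‖(A h) h‖ ≤ ‖A h‖ * ‖h‖ := (A h).le_opNorm h
      _ ≤ (‖A‖ * ‖h‖) * ‖h‖ := by
          gcongr; exact A.le_opNorm h
      _ ≤ ((L₂ * ‖(x + t • h) - (x + (0:ℝ) • h)‖) * ‖h‖) * ‖h‖ := by
          gcongr
          exact hLip _ _
      _ = K * t := by
          have : (x + t • h) - (x + (0:ℝ) • h) = t • h := by
            simp
          rw [this, norm_smul]
          simp [Real.norm_eq_abs, abs_of_nonneg ht.1, hK]
          ring
  have stepB : ∀ t ∈ Icc (0:ℝ) 1, ‖g1 t - g1 0 - t * g2 0‖ ≤ K / 2 * t ^ 2 := by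
    have hu : ∀ t : ℝ, HasDerivAt (fun t => g1 t - g1 0 - t * g2 0) (g2 t - g2 0) t := by
      intro t
      have := ((hg1 t).sub (hasDerivAt_const t (g1 0))).sub
        ((hasDerivAt_id t).mul_const (g2 0))
      exact this.congr_deriv (by ring)
    have hB : ∀ t : ℝ, HasDerivAt (fun t => K / 2 * t ^ 2) (K * t) t := by
      intro t
      have := (hasDerivAt_pow 2 t).const_mul (K / 2)
      refine this.congr_deriv ?_
      ring
    intro t ht
    exact image_norm_le_of_norm_deriv_right_le_deriv_boundary
      (fun s _ => (hu s).continuousAt.continuousWithinAt)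
      (fun s _ => (hu s).hasDerivWithinAt)
      (by simp) hB (fun s hs => key s ⟨hs.1, le_of_lt hs.2⟩) ht
  have stepC : ∀ t ∈ Icc (0:ℝ) 1,
      ‖g t - g 0 - t * g1 0 - t ^ 2 / 2 * g2 0‖ ≤ K / 6 * t ^ 3 := by
    have hu : ∀ t : ℝ, HasDerivAt (fun t => g t - g 0 - t * g1 0 - t ^ 2 / 2 * g2 0)
        (g1 t - g1 0 - t * g2 0) t := by
      intro t
      have h4 : HasDerivAt (fun t : ℝ => t ^ 2 / 2 * g2 0) (t * g2 0) t := by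
        have := ((hasDerivAt_pow 2 t).div_const 2).mul_const (g2 0)
        refine this.congr_deriv ?_
        ring
      have := (((hg t).sub (hasDerivAt_const t (g 0))).sub
        ((hasDerivAt_id t).mul_const (g1 0))).sub h4
      exact this.congr_deriv (by ring)
    have hB : ∀ t : ℝ, HasDerivAt (fun t => K / 6 * t ^ 3) (K / 2 * t ^ 2) t := by
      intro t
      have := (hasDerivAt_pow 3 t).const_mul (K / 6)
      refine this.congr_deriv ?_
      ring
    intro t ht
    exact image_norm_le_of_norm_deriv_right_le_deriv_boundary
      (fun s _ => (hu s).continuousAt.continuousWithinAt)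
      (fun s _ => (hu s).hasDerivWithinAt)
      (by simp) hB (fun s hs => stepB s ⟨hs.1, le_of_lt hs.2⟩) ht
  have hfin := stepC 1 ⟨zero_le_one, le_rfl⟩
  have hg1' : g 1 = f (x + h) := by simp [hg_def]
  have hg0 : g 0 = f x := by simp [hg_def]
  have hg10 : g1 0 = fderiv ℝ f x h := by simp [hg1_def]
  have hg20 : g2 0 = (fderiv ℝ (fun z => fderiv ℝ f z) x h) h := by simp [hg2_def]
  rw [Real.norm_eq_abs, abs_le] at hfin
  have := hfin.2
  rw [hg1', hg0, hg10, hg20] at this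
  nlinarith [this]

/-- Zero out the coordinates of `v` outside `S`. -/
noncomputable def restrict {n : ℕ} (S : Finset (Fin n)) (v : EuclideanSpace ℝ (Fin n)) :
    EuclideanSpace ℝ (Fin n) := WithLp.toLp 2 (fun i => if i ∈ S then v i else 0)

/-- Model decrease: if `h*` globally minimizes the coordinate-restricted cubic model with
regularization `M ≥ L₂` over vectors supported on `S`, then
`f(x) − f(x + h*) ≥ (M/12)‖h*‖³`. -/
theorem model_decrease {n : ℕ} (f : EuclideanSpace ℝ (Fin n) → ℝ) (L₂ M : ℝ)
    (hL₂ : 0 ≤ L₂) (hM : L₂ ≤ M)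
    (hf : ContDiff ℝ 2 f)
    (hLip : ∀ x y : EuclideanSpace ℝ (Fin n),
      ‖fderiv ℝ (fun z => fderiv ℝ f z) x - fderiv ℝ (fun z => fderiv ℝ f z) y‖ ≤ L₂ * ‖x - y‖)
    (S : Finset (Fin n)) (x hs : EuclideanSpace ℝ (Fin n))
    (hsupp : ∀ i ∉ S, hs i = 0)
    (hmin : ∀ h : EuclideanSpace ℝ (Fin n), (∀ i ∉ S, h i = 0) →
      f x + ⟪restrict S (gradient f x), hs⟫
          + (1 / 2) * ((fderiv ℝ (fun z => fderiv ℝ f z) x (restrict S hs)) (restrict S hs))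
          + (M / 6) * ‖restrict S hs‖ ^ 3
        ≤ f x + ⟪restrict S (gradient f x), h⟫
          + (1 / 2) * ((fderiv ℝ (fun z => fderiv ℝ f z) x (restrict S h)) (restrict S h))
          + (M / 6) * ‖restrict S h‖ ^ 3) :
    f x - f (x + hs) ≥ (M / 12) * ‖hs‖ ^ 3 := by
  classical
  -- restrict of a vector supported on S is itself
  have hres : ∀ v : EuclideanSpace ℝ (Fin n), (∀ i ∉ S, v i = 0) → restrict S v = v := by
    intro v hv
    ext i
    by_cases hi : i ∈ S
    · simp [restrict, hi]
    · simp [restrict, hi, hv i hi]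
  have hrs : restrict S hs = hs := hres hs hsupp
  set a : ℝ := ⟪restrict S (gradient f x), hs⟫ with ha_def
  set b : ℝ := (fderiv ℝ (fun z => fderiv ℝ f z) x hs) hs with hb_def
  set r : ℝ := ‖hs‖ with hr_def
  have hr0 : (0:ℝ) ≤ r := norm_nonneg _
  -- scaled test vectors
  have hΦ : ∀ t : ℝ, a + b / 2 + (M / 6) * r ^ 3
      ≤ t * a + t ^ 2 * (b / 2) + (M / 6) * (|t| * r) ^ 3 := by
    intro t
    have hsupp' : ∀ i ∉ S, (t • hs) i = 0 := by
      intro i hi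
      have : hs i = 0 := hsupp i hi
      simp [PiLp.smul_apply, this]
    have h1 := hmin (t • hs) hsupp'
    have hrts : restrict S (t • hs) = t • hs := hres _ hsupp'
    rw [hrs, hrts] at h1
    have hinner : ⟪restrict S (gradient f x), t • hs⟫ = t * a := real_inner_smul_right _ _ _
    have hquad : (fderiv ℝ (fun z => fderiv ℝ f z) x (t • hs)) (t • hs) = t ^ 2 * b := by
      rw [map_smul]
      simp [ContinuousLinearMap.smul_apply, hb_def, smul_eq_mul]
      ring
    have hnorm : ‖t • hs‖ = |t| * r := by rw [norm_smul, Real.norm_eq_abs, hr_def]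
    rw [hinner, hquad, hnorm] at h1
    linarith
  have hA : a ≤ 0 := by
    have := hΦ (-1)
    simp at this
    linarith
  have hstat : a + b + (M / 2) * r ^ 3 = 0 := by
    set G : ℝ → ℝ := fun t => t * a + t ^ 2 * (b / 2) + t ^ 3 * ((M / 6) * r ^ 3) with hG
    have hloc : IsLocalMin G 1 := by
      filter_upwards [Ioo_mem_nhds (by norm_num : (0:ℝ) < 1) (by norm_num : (1:ℝ) < 2)] with t ht
      have := hΦ t
      have habs : |t| = t := abs_of_pos ht.1
      rw [habs] at this
      simp only [hG]
      nlinarith [this]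
    have hd : HasDerivAt G (a + b + (M / 2) * r ^ 3) 1 := by
      have h1 : HasDerivAt (fun t : ℝ => t * a) a 1 := by
        simpa using (hasDerivAt_id (1:ℝ)).mul_const a
      have h2 : HasDerivAt (fun t : ℝ => t ^ 2 * (b / 2)) b 1 := by
        have := (hasDerivAt_pow 2 (1:ℝ)).mul_const (b / 2)
        refine this.congr_deriv ?_
        push_cast
        ring
      have h3 : HasDerivAt (fun t : ℝ => t ^ 3 * ((M / 6) * r ^ 3)) ((M / 2) * r ^ 3) 1 := by
        have := (hasDerivAt_pow 3 (1:ℝ)).mul_const ((M / 6) * r ^ 3)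
        refine this.congr_deriv ?_
        push_cast
        ring
      exact (h1.add h2).add h3
    have := hloc.deriv_eq_zero
    rw [hd.deriv] at this
    exact this
  -- link a with the Fréchet derivative
  have hgrad : a = fderiv ℝ f x hs := by
    have h1 : a = ⟪gradient f x, hs⟫ := by
      rw [ha_def]
      simp only [PiLp.inner_apply, RCLike.inner_apply, conj_trivial]
      apply Finset.sum_congr rfl
      intro i _
      by_cases hi : i ∈ S
      · simp [restrict, hi]
      · simp [restrict, hi, hsupp i hi]
    rw [h1, gradient, InnerProductSpace.toDual_symm_apply]
  have htay := taylor_cubic_bound f L₂ hL₂ hf hLip x hs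
  rw [← hgrad, ← hb_def, ← hr_def] at htay
  have hr3 : (0:ℝ) ≤ r ^ 3 := by positivity
  nlinarith [htay, hstat, hA, hr3, hr0]
end

section
/- Let f: ℝ^n → ℝ have L₂-Lipschitz Hessian, M ≥ L₂, and let h* be a global minimizer of the cubic model m(h) = ⟨∇f(x)_[S], h⟩ + (1/2)⟨∇²f(x)_[S] h, h⟩ + (M/6)‖h‖³ over vectors supported on S. Then ‖∇f(x + h*)‖ ≤ ((M+L₂)/2)‖h*‖² + ‖∇f(x) − ∇f(x)_[S]‖ + ‖∇²f(x) − ∇²f(x)_[S]‖ · ‖h*‖. -/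
open scoped RealInnerProductSpace

/-- The Hessian matrix of `f` at `x`. -/
noncomputable def hessMat {n : ℕ} (f : EuclideanSpace ℝ (Fin n) → ℝ)
    (x : EuclideanSpace ℝ (Fin n)) : Matrix (Fin n) (Fin n) ℝ :=
  fun i j => (fderiv ℝ (fun z => fderiv ℝ f z) x (EuclideanSpace.single i 1))
      (EuclideanSpace.single j 1)

-- coordinate formula for toEuclideanCLM
lemma clm_apply_coord {n : ℕ} (A : Matrix (Fin n) (Fin n) ℝ) (v : EuclideanSpace ℝ (Fin n))
    (i : Fin n) : (Matrix.toEuclideanCLM (𝕜 := ℝ) A) v i = ∑ j, A i j * v j := by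
  have h := congrFun (Matrix.ofLp_toEuclideanCLM (𝕜 := ℝ) A v) i
  simpa [Matrix.toLin'_apply, Matrix.mulVec, dotProduct] using h

lemma inner_coord {n : ℕ} (u v : EuclideanSpace ℝ (Fin n)) : ⟪u, v⟫ = ∑ i, u i * v i := by
  simp [PiLp.inner_apply, RCLike.inner_apply, mul_comm]

lemma cube_eq_rpow (a : ℝ) (ha : 0 ≤ a) : a ^ 3 = (a ^ 2) ^ (3/2 : ℝ) := by
  rw [← Real.rpow_natCast a 3, ← Real.rpow_natCast a 2, ← Real.rpow_mul ha]
  norm_num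

lemma sq_rpow_half (a : ℝ) (ha : 0 ≤ a) : (a ^ 2) ^ ((3:ℝ)/2 - 1) = a := by
  rw [← Real.rpow_natCast a 2, ← Real.rpow_mul ha]
  norm_num

lemma taylor_bound {n : ℕ} (f : EuclideanSpace ℝ (Fin n) → ℝ) (L₂ : ℝ)
    (hf : ContDiff ℝ 2 f)
    (hLip : ∀ x y : EuclideanSpace ℝ (Fin n),
      ‖fderiv ℝ (fun z => fderiv ℝ f z) x - fderiv ℝ (fun z => fderiv ℝ f z) y‖ ≤ L₂ * ‖x - y‖)
    (x h : EuclideanSpace ℝ (Fin n)) :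
    ‖fderiv ℝ f (x + h) - fderiv ℝ f x - fderiv ℝ (fun z => fderiv ℝ f z) x h‖
      ≤ L₂ / 2 * ‖h‖ ^ 2 := by
  set D2 : EuclideanSpace ℝ (Fin n) →
      (EuclideanSpace ℝ (Fin n) →L[ℝ] (EuclideanSpace ℝ (Fin n) →L[ℝ] ℝ)) :=
    fun z => fderiv ℝ (fun z => fderiv ℝ f z) z with hD2
  have hcd1 : ContDiff ℝ 1 (fderiv ℝ f) := hf.fderiv_right (le_refl 2)
  have hdf' : Differentiable ℝ (fderiv ℝ f) := hcd1.differentiable one_ne_zero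
  have hd2 : ∀ z, HasFDerivAt (fderiv ℝ f) (D2 z) z := fun z => (hdf' z).hasFDerivAt
  set F : ℝ → (EuclideanSpace ℝ (Fin n) →L[ℝ] ℝ) :=
    fun t => fderiv ℝ f (x + t • h) - fderiv ℝ f x - t • (D2 x h) with hF
  have hF' : ∀ t : ℝ, HasDerivAt F (D2 (x + t • h) h - D2 x h) t := by
    intro t
    have hline : HasDerivAt (fun s : ℝ => x + s • h) h t := by
      simpa using ((hasDerivAt_id t).smul_const h).const_add x
    have h1 : HasDerivAt (fun s : ℝ => fderiv ℝ f (x + s • h)) (D2 (x + t • h) h) t :=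
      (hd2 (x + t • h)).comp_hasDerivAt t hline
    have h2 : HasDerivAt (fun s : ℝ => s • (D2 x h)) (D2 x h) t := by
      simpa using (hasDerivAt_id t).smul_const (D2 x h)
    simpa [hF] using (h1.sub_const (fderiv ℝ f x)).fun_sub h2
  have hFc : ContinuousOn F (Set.Icc 0 1) :=
    fun t _ => ((hF' t).continuousAt).continuousWithinAt
  have hFd : ∀ t ∈ Set.Ico (0:ℝ) 1,
      HasDerivWithinAt F (D2 (x + t • h) h - D2 x h) (Set.Ici t) t :=
    fun t _ => (hF' t).hasDerivWithinAt
  have hB : ∀ t : ℝ, HasDerivAt (fun t : ℝ => L₂ / 2 * ‖h‖ ^ 2 * t ^ 2)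
      (L₂ / 2 * ‖h‖ ^ 2 * (2 * t)) t := by
    intro t
    have := (hasDerivAt_pow 2 t).const_mul (L₂ / 2 * ‖h‖ ^ 2)
    simpa [mul_comm, mul_assoc, pow_one] using this
  have hF0 : ‖F 0‖ ≤ L₂ / 2 * ‖h‖ ^ 2 * (0:ℝ) ^ 2 := by simp [hF]
  have bound : ∀ t ∈ Set.Ico (0:ℝ) 1,
      ‖D2 (x + t • h) h - D2 x h‖ ≤ L₂ / 2 * ‖h‖ ^ 2 * (2 * t) := by
    intro t ht
    have h1 : ‖D2 (x + t • h) h - D2 x h‖ ≤ ‖D2 (x + t • h) - D2 x‖ * ‖h‖ := by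
      simpa using (D2 (x + t • h) - D2 x).le_opNorm h
    have h2 : ‖D2 (x + t • h) - D2 x‖ ≤ L₂ * (t * ‖h‖) := by
      have := hLip (x + t • h) x
      simpa [norm_smul, abs_of_nonneg ht.1] using this
    have h3 : ‖D2 (x + t • h) - D2 x‖ * ‖h‖ ≤ L₂ * (t * ‖h‖) * ‖h‖ :=
      mul_le_mul_of_nonneg_right h2 (norm_nonneg h)
    calc ‖D2 (x + t • h) h - D2 x h‖ ≤ L₂ * (t * ‖h‖) * ‖h‖ := h1.trans h3
      _ = L₂ / 2 * ‖h‖ ^ 2 * (2 * t) := by ring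
  have key := image_norm_le_of_norm_deriv_right_le_deriv_boundary hFc hFd hF0 hB bound
    (Set.right_mem_Icc.mpr zero_le_one)
  simpa [hF] using key

lemma dual_coord {n : ℕ} (φ : EuclideanSpace ℝ (Fin n) →L[ℝ] ℝ) (i : Fin n) :
    ((InnerProductSpace.toDual ℝ (EuclideanSpace ℝ (Fin n))).symm φ) i
      = φ (EuclideanSpace.single i (1:ℝ)) := by
  have h1 := InnerProductSpace.toDual_symm_apply (𝕜 := ℝ)
    (y := φ) (x := EuclideanSpace.single i (1:ℝ))
  have h2 := EuclideanSpace.inner_single_right (𝕜 := ℝ) i 1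
    ((InnerProductSpace.toDual ℝ (EuclideanSpace ℝ (Fin n))).symm φ)
  rw [h2] at h1
  simpa using h1

lemma coordCLM {n : ℕ} (φ : EuclideanSpace ℝ (Fin n) →L[ℝ] ℝ) (v : EuclideanSpace ℝ (Fin n)) :
    φ v = ∑ j, φ (EuclideanSpace.single j (1:ℝ)) * v j := by
  have h0 : φ v = ⟪(InnerProductSpace.toDual ℝ (EuclideanSpace ℝ (Fin n))).symm φ, v⟫ :=
    (InnerProductSpace.toDual_symm_apply).symm
  rw [h0, inner_coord]
  exact Finset.sum_congr rfl fun j _ => by rw [dual_coord]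

lemma keyH {n : ℕ} (f : EuclideanSpace ℝ (Fin n) → ℝ) (hf : ContDiff ℝ 2 f)
    (x v : EuclideanSpace ℝ (Fin n)) :
    (Matrix.toEuclideanCLM (𝕜 := ℝ) (hessMat f x)) v
      = (InnerProductSpace.toDual ℝ (EuclideanSpace ℝ (Fin n))).symm
          (fderiv ℝ (fun z => fderiv ℝ f z) x v) := by
  set D2 := fderiv ℝ (fun z => fderiv ℝ f z) x with hD2
  have hd1 : ∀ y, HasFDerivAt f (fderiv ℝ f y) y :=
    fun y => ((hf.differentiable two_ne_zero) y).hasFDerivAt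
  have hdf' : Differentiable ℝ (fderiv ℝ f) :=
    (hf.fderiv_right (le_refl 2)).differentiable one_ne_zero
  have hd2 : HasFDerivAt (fderiv ℝ f) D2 x := (hdf' x).hasFDerivAt
  have sym : ∀ u w, D2 u w = D2 w u := second_derivative_symmetric hd1 hd2
  ext i
  rw [clm_apply_coord, dual_coord, sym v (EuclideanSpace.single i 1),
    coordCLM (D2 (EuclideanSpace.single i 1)) v]
  exact Finset.sum_congr rfl fun j _ => by rw [hessMat, ← hD2]

set_option maxHeartbeats 1000000 in
/-- New gradient norm bound: if `h*` globally minimizes the coordinate-restricted cubic model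
with `M ≥ L₂` over vectors supported on `S`, then
`‖∇f(x+h*)‖ ≤ ((M+L₂)/2)‖h*‖² + ‖∇f(x) − ∇f(x)_[S]‖ + ‖∇²f(x) − ∇²f(x)_[S]‖·‖h*‖`. -/
theorem new_grad_norm_bound {n : ℕ} (f : EuclideanSpace ℝ (Fin n) → ℝ) (L₂ M : ℝ)
    (hL₂ : 0 ≤ L₂) (hM : L₂ ≤ M)
    (hf : ContDiff ℝ 2 f)
    (hLip : ∀ x y : EuclideanSpace ℝ (Fin n),
      ‖fderiv ℝ (fun z => fderiv ℝ f z) x - fderiv ℝ (fun z => fderiv ℝ f z) y‖ ≤ L₂ * ‖x - y‖)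
    (S : Finset (Fin n)) (x hs : EuclideanSpace ℝ (Fin n))
    (hsupp : ∀ i ∉ S, hs i = 0)
    (hmin : ∀ h : EuclideanSpace ℝ (Fin n), (∀ i ∉ S, h i = 0) →
      ⟪restrict S (gradient f x), hs⟫
          + (1 / 2) * ⟪(Matrix.toEuclideanCLM (𝕜 := ℝ) (restrictM S (hessMat f x))) hs, hs⟫
          + (M / 6) * ‖hs‖ ^ 3
        ≤ ⟪restrict S (gradient f x), h⟫
          + (1 / 2) * ⟪(Matrix.toEuclideanCLM (𝕜 := ℝ) (restrictM S (hessMat f x))) h, h⟫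
          + (M / 6) * ‖h‖ ^ 3) :
    ‖gradient f (x + hs)‖
      ≤ ((M + L₂) / 2) * ‖hs‖ ^ 2
        + ‖gradient f x - restrict S (gradient f x)‖
        + ‖Matrix.toEuclideanCLM (𝕜 := ℝ) (hessMat f x - restrictM S (hessMat f x))‖ * ‖hs‖ := by
  have hM0 : 0 ≤ M := hL₂.trans hM
  set g := restrict S (gradient f x) with hg
  set A := Matrix.toEuclideanCLM (𝕜 := ℝ) (restrictM S (hessMat f x)) with hA
  set H := Matrix.toEuclideanCLM (𝕜 := ℝ) (hessMat f x) with hH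
  -- symmetry of the second derivative
  have hd1 : ∀ y, HasFDerivAt f (fderiv ℝ f y) y :=
    fun y => ((hf.differentiable two_ne_zero) y).hasFDerivAt
  have hdf' : Differentiable ℝ (fderiv ℝ f) :=
    (hf.fderiv_right (le_refl 2)).differentiable one_ne_zero
  have symD : ∀ u w, fderiv ℝ (fun z => fderiv ℝ f z) x u w
      = fderiv ℝ (fun z => fderiv ℝ f z) x w u :=
    second_derivative_symmetric hd1 (hdf' x).hasFDerivAt
  have hsymM : ∀ i j, hessMat f x i j = hessMat f x j i := fun i j => symD _ _
  have symB : ∀ i j, restrictM S (hessMat f x) i j = restrictM S (hessMat f x) j i := by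
    intro i j
    simp only [restrictM]
    by_cases h1 : i ∈ S <;> by_cases h2 : j ∈ S <;> simp [h1, h2, hsymM i j]
  have symA : ∀ u v : EuclideanSpace ℝ (Fin n), ⟪A u, v⟫ = ⟪A v, u⟫ := by
    intro u v
    rw [inner_coord, inner_coord]
    simp only [hA, clm_apply_coord, Finset.sum_mul]
    rw [Finset.sum_comm]
    exact Finset.sum_congr rfl fun i _ => Finset.sum_congr rfl fun j _ => by
      rw [symB j i]; ring
  -- first-order stationarity
  have stat : ∀ e : EuclideanSpace ℝ (Fin n), (∀ i ∉ S, e i = 0) →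
      ⟪g, e⟫ + ⟪A hs, e⟫ + (M/2) * ‖hs‖ * ⟪hs, e⟫ = 0 := by
    intro e he
    set q : ℝ → ℝ := fun t => ⟪g, hs + t • e⟫
        + (1/2) * ⟪A (hs + t • e), hs + t • e⟫ + (M/6) * ‖hs + t • e‖ ^ 3 with hq
    have hmin' : ∀ t, q 0 ≤ q t := by
      intro t
      have h1 := hmin (hs + t • e) (fun i hi => by simp [hsupp i hi, he i hi])
      simpa [hq] using h1
    have hq_eq : ∀ t, q t =
        (⟪g, hs⟫ + (1/2) * ⟪A hs, hs⟫)
          + (⟪g, e⟫ + (1/2) * (⟪A hs, e⟫ + ⟪A e, hs⟫)) * t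
          + ((1/2) * ⟪A e, e⟫) * t ^ 2
          + (M/6) * ((‖hs‖ ^ 2 + 2 * ⟪hs, e⟫ * t + ‖e‖ ^ 2 * t ^ 2) ^ ((3:ℝ)/2)) := by
      intro t
      have hAadd : A (hs + t • e) = A hs + t • A e := by rw [map_add, map_smul]
      have hsq : ‖hs + t • e‖ ^ 2 = ‖hs‖ ^ 2 + 2 * ⟪hs, e⟫ * t + ‖e‖ ^ 2 * t ^ 2 := by
        rw [norm_add_sq_real, real_inner_smul_right, norm_smul]
        simp [mul_pow, sq_abs]
        ring
      have hnorm3 : ‖hs + t • e‖ ^ 3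
          = (‖hs‖ ^ 2 + 2 * ⟪hs, e⟫ * t + ‖e‖ ^ 2 * t ^ 2) ^ ((3:ℝ)/2) := by
        rw [← hsq]
        have := cube_eq_rpow ‖hs + t • e‖ (norm_nonneg _)
        convert this using 3
      simp only [hq, hAadd, inner_add_left, inner_add_right, real_inner_smul_left,
        real_inner_smul_right, hnorm3]
      ring
    have hr : HasDerivAt (fun t : ℝ => ‖hs‖ ^ 2 + 2 * ⟪hs, e⟫ * t + ‖e‖ ^ 2 * t ^ 2)
        (2 * ⟪hs, e⟫) 0 := by
      have i1 : HasDerivAt (fun t : ℝ => 2 * ⟪hs, e⟫ * t) (2 * ⟪hs, e⟫) 0 := by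
        simpa using (hasDerivAt_id (0:ℝ)).const_mul (2 * ⟪hs, e⟫)
      have i2 : HasDerivAt (fun t : ℝ => ‖e‖ ^ 2 * t ^ 2) 0 0 := by
        simpa using (hasDerivAt_pow 2 (0:ℝ)).const_mul (‖e‖ ^ 2)
      simpa using (i1.const_add (‖hs‖ ^ 2)).fun_add i2
    have hout : HasDerivAt (fun y : ℝ => y ^ ((3:ℝ)/2)) (((3:ℝ)/2) * ‖hs‖)
        ((fun t : ℝ => ‖hs‖ ^ 2 + 2 * ⟪hs, e⟫ * t + ‖e‖ ^ 2 * t ^ 2) 0) := by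
      have h0 : ((fun t : ℝ => ‖hs‖ ^ 2 + 2 * ⟪hs, e⟫ * t + ‖e‖ ^ 2 * t ^ 2) 0) = ‖hs‖ ^ 2 := by
        norm_num
      rw [h0]
      have := Real.hasDerivAt_rpow_const (x := ‖hs‖ ^ 2) (p := (3:ℝ)/2) (Or.inr (by norm_num))
      simpa [sq_rpow_half ‖hs‖ (norm_nonneg hs)] using this
    have hcube : HasDerivAt
        (fun t : ℝ => (‖hs‖ ^ 2 + 2 * ⟪hs, e⟫ * t + ‖e‖ ^ 2 * t ^ 2) ^ ((3:ℝ)/2))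
        (((3:ℝ)/2) * ‖hs‖ * (2 * ⟪hs, e⟫)) 0 := by
      exact hout.comp 0 hr
    have hqd : HasDerivAt q
        ((⟪g, e⟫ + (1/2) * (⟪A hs, e⟫ + ⟪A e, hs⟫))
          + (M/6) * (((3:ℝ)/2) * ‖hs‖ * (2 * ⟪hs, e⟫))) 0 := by
      have hq_fun : q = fun t => (⟪g, hs⟫ + (1/2) * ⟪A hs, hs⟫)
          + (⟪g, e⟫ + (1/2) * (⟪A hs, e⟫ + ⟪A e, hs⟫)) * t
          + ((1/2) * ⟪A e, e⟫) * t ^ 2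
          + (M/6) * ((‖hs‖ ^ 2 + 2 * ⟪hs, e⟫ * t + ‖e‖ ^ 2 * t ^ 2) ^ ((3:ℝ)/2)) :=
        funext hq_eq
      rw [hq_fun]
      have i1 : HasDerivAt (fun t : ℝ => (⟪g, e⟫ + (1/2) * (⟪A hs, e⟫ + ⟪A e, hs⟫)) * t)
          (⟪g, e⟫ + (1/2) * (⟪A hs, e⟫ + ⟪A e, hs⟫)) 0 := by
        simpa using (hasDerivAt_id (0:ℝ)).const_mul (⟪g, e⟫ + (1/2) * (⟪A hs, e⟫ + ⟪A e, hs⟫))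
      have i2 : HasDerivAt (fun t : ℝ => ((1/2) * ⟪A e, e⟫) * t ^ 2) 0 0 := by
        simpa using (hasDerivAt_pow 2 (0:ℝ)).const_mul ((1/2) * ⟪A e, e⟫)
      have p1 := (i1.const_add (⟪g, hs⟫ + (1/2) * ⟪A hs, hs⟫)).fun_add i2
      have := p1.fun_add (hcube.const_mul (M/6))
      simpa using this
    have hloc : IsLocalMin q 0 := Filter.Eventually.of_forall hmin'
    have hder0 := hloc.hasDerivAt_eq_zero hqd
    have hAe : ⟪A e, hs⟫ = ⟪A hs, e⟫ := symA e hs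
    rw [hAe] at hder0
    linear_combination hder0
  -- the stationarity vector vanishes
  have hw0 : g + A hs + ((M/2) * ‖hs‖) • hs = 0 := by
    set w := g + A hs + ((M/2) * ‖hs‖) • hs with hwdef
    have hwsupp : ∀ i ∉ S, w i = 0 := by
      intro i hi
      have h1 : g i = 0 := by simp [hg, restrict, hi]
      have h2 : (A hs) i = 0 := by
        rw [hA, clm_apply_coord]
        exact Finset.sum_eq_zero fun j _ => by simp [restrictM, hi]
      have h3 : w i = g i + (A hs) i + ((M/2) * ‖hs‖) * hs i := rfl
      rw [h3, h1, h2, hsupp i hi]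
      ring
    have hst := stat w hwsupp
    have hww : ⟪w, w⟫ = 0 := by
      have hexp : ⟪w, w⟫ = ⟪g, w⟫ + ⟪A hs, w⟫ + M / 2 * ‖hs‖ * ⟪hs, w⟫ := by
        nth_rewrite 1 [hwdef]
        rw [inner_add_left, inner_add_left, real_inner_smul_left]
      exact hexp.trans hst
    exact inner_self_eq_zero.mp hww
  have hstatnorm : ‖g + A hs‖ = M/2 * ‖hs‖ ^ 2 := by
    have h1 : g + A hs = -(((M/2) * ‖hs‖) • hs) := by
      have := hw0
      linear_combination (norm := module) this
    rw [h1, norm_neg, norm_smul, Real.norm_eq_abs,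
      abs_of_nonneg (by positivity : (0:ℝ) ≤ M/2 * ‖hs‖)]
    ring
  -- Taylor bound in gradient form
  have taylorG : ‖gradient f (x + hs) - gradient f x - H hs‖ ≤ L₂/2 * ‖hs‖ ^ 2 := by
    have ht := taylor_bound f L₂ hf hLip x hs
    have heq : gradient f (x + hs) - gradient f x - H hs
        = (InnerProductSpace.toDual ℝ (EuclideanSpace ℝ (Fin n))).symm
            (fderiv ℝ f (x + hs) - fderiv ℝ f x - fderiv ℝ (fun z => fderiv ℝ f z) x hs) := by
      rw [hH, keyH f hf x hs]
      unfold gradient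
      rw [← map_sub, ← map_sub]
    rw [heq, LinearIsometryEquiv.norm_map]
    exact ht
  -- assemble
  have hHA : H hs - A hs
      = (Matrix.toEuclideanCLM (𝕜 := ℝ) (hessMat f x - restrictM S (hessMat f x))) hs := by
    rw [map_sub, hH, hA]
    rfl
  have hdecomp : gradient f (x + hs)
      = (gradient f (x + hs) - gradient f x - H hs)
        + ((Matrix.toEuclideanCLM (𝕜 := ℝ) (hessMat f x - restrictM S (hessMat f x))) hs)
        + (g + A hs) + (gradient f x - g) := by
    rw [← hHA]
    abel
  have hb2 : ‖(Matrix.toEuclideanCLM (𝕜 := ℝ) (hessMat f x - restrictM S (hessMat f x))) hs‖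
      ≤ ‖Matrix.toEuclideanCLM (𝕜 := ℝ) (hessMat f x - restrictM S (hessMat f x))‖ * ‖hs‖ :=
    ContinuousLinearMap.le_opNorm _ _
  have tri : ‖gradient f (x + hs)‖
      ≤ ‖gradient f (x + hs) - gradient f x - H hs‖
        + ‖(Matrix.toEuclideanCLM (𝕜 := ℝ) (hessMat f x - restrictM S (hessMat f x))) hs‖
        + ‖g + A hs‖ + ‖gradient f x - g‖ := by
    calc ‖gradient f (x + hs)‖ = ‖_ + _ + _ + _‖ := by rw [← hdecomp]
      _ ≤ _ := by
          apply (norm_add_le _ _).trans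
          apply add_le_add_left
          apply (norm_add_le _ _).trans
          apply add_le_add_left
          exact norm_add_le _ _
  rw [hstatnorm] at tri
  linarith [tri, taylorG, hb2]
end

section
/- Let f: ℝ^n → ℝ have L₂-Lipschitz Hessian, M ≥ L₂, and let h* be a global minimizer of the coordinate-restricted cubic model at x (as in SSCN). Then −λ_min(∇²f(x + h*)) ≤ (3M/2)‖h*‖ + ‖∇²f(x) − ∇²f(x)_[S]‖. -/
open scoped RealInnerProductSpace

lemma inner_toEuclideanCLM {n : ℕ} (A : Matrix (Fin n) (Fin n) ℝ)
    (v w : EuclideanSpace ℝ (Fin n)) :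
    ⟪(Matrix.toEuclideanCLM (𝕜 := ℝ) A) v, w⟫ = ∑ i, (∑ j, A i j * v j) * w i := by
  rw [PiLp.inner_apply]
  simp only [RCLike.inner_apply, conj_trivial]
  have h : ∀ i, (Matrix.toEuclideanCLM (𝕜 := ℝ) A) v i = ∑ j, A i j * v j := fun i => rfl
  simp_rw [h]
  try simp_rw [mul_comm]

lemma eq_sum_singles {n : ℕ} (v : EuclideanSpace ℝ (Fin n)) :
    v = ∑ i, v i • EuclideanSpace.single i (1:ℝ) := by
  have := (EuclideanSpace.basisFun (Fin n) ℝ).sum_repr v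
  simp only [EuclideanSpace.basisFun_repr, EuclideanSpace.basisFun_apply] at this
  exact this.symm

lemma inner_hessMat_eq {n : ℕ} (f : EuclideanSpace ℝ (Fin n) → ℝ)
    (y : EuclideanSpace ℝ (Fin n)) (v w : EuclideanSpace ℝ (Fin n)) :
    ⟪(Matrix.toEuclideanCLM (𝕜 := ℝ) (hessMat f y)) v, w⟫
      = (fderiv ℝ (fun z => fderiv ℝ f z) y w) v := by
  rw [inner_toEuclideanCLM]
  conv_rhs => rw [eq_sum_singles w, eq_sum_singles v]
  simp only [map_sum, map_smul, ContinuousLinearMap.sum_apply, ContinuousLinearMap.smul_apply,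
    smul_eq_mul, ContinuousLinearMap.coe_sum', ContinuousLinearMap.coe_smul', Finset.sum_apply,
    Pi.smul_apply]
  simp_rw [Finset.sum_mul, Finset.mul_sum]
  rw [Finset.sum_comm]
  apply Finset.sum_congr rfl
  intro i _
  apply Finset.sum_congr rfl
  intro j _
  unfold hessMat
  ring

lemma norm_restrict_le {n : ℕ} (S : Finset (Fin n)) (v : EuclideanSpace ℝ (Fin n)) :
    ‖restrict S v‖ ≤ ‖v‖ := by
  rw [EuclideanSpace.norm_eq, EuclideanSpace.norm_eq]
  apply Real.sqrt_le_sqrt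
  apply Finset.sum_le_sum
  intro i _
  unfold restrict
  by_cases hi : i ∈ S
  · simp [hi]
  · simp [hi]
    positivity

lemma restrict_support {n : ℕ} (S : Finset (Fin n)) (v : EuclideanSpace ℝ (Fin n)) :
    ∀ i ∉ S, restrict S v i = 0 := by
  intro i hi
  unfold restrict
  simp [hi]

lemma inner_restrictM_eq {n : ℕ} (S : Finset (Fin n)) (A : Matrix (Fin n) (Fin n) ℝ)
    (v : EuclideanSpace ℝ (Fin n)) :
    ⟪(Matrix.toEuclideanCLM (𝕜 := ℝ) (restrictM S A)) v, v⟫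
      = ⟪(Matrix.toEuclideanCLM (𝕜 := ℝ) (restrictM S A)) (restrict S v), restrict S v⟫ := by
  rw [inner_toEuclideanCLM, inner_toEuclideanCLM]
  apply Finset.sum_congr rfl
  intro i _
  by_cases hi : i ∈ S
  · have hwi : restrict S v i = v i := by unfold restrict; simp [hi]
    rw [hwi]
    congr 1
    apply Finset.sum_congr rfl
    intro j _
    by_cases hj : j ∈ S
    · have : restrict S v j = v j := by unfold restrict; simp [hj]
      rw [this]
    · unfold restrictM
      simp [hj]
  · have h1 : ∀ w : EuclideanSpace ℝ (Fin n), (∑ j, restrictM S A i j * w j) = 0 := by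
      intro w
      apply Finset.sum_eq_zero
      intro j _
      unfold restrictM
      simp [hi]
    rw [h1, h1, zero_mul, zero_mul]

noncomputable def model {n : ℕ} (g : EuclideanSpace ℝ (Fin n))
    (T : EuclideanSpace ℝ (Fin n) →L[ℝ] EuclideanSpace ℝ (Fin n)) (M : ℝ)
    (h : EuclideanSpace ℝ (Fin n)) : ℝ :=
  ⟪g, h⟫ + (1/2) * ⟪T h, h⟫ + (M/6) * ‖h‖^3

lemma model_expand {n : ℕ} (g : EuclideanSpace ℝ (Fin n))
    (T : EuclideanSpace ℝ (Fin n) →L[ℝ] EuclideanSpace ℝ (Fin n)) (M : ℝ)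
    (hs u : EuclideanSpace ℝ (Fin n)) (t : ℝ) :
    model g T M (hs + t • u)
      = ⟪g, hs⟫ + (1/2) * ⟪T hs, hs⟫
        + (⟪g, u⟫ + (1/2) * (⟪T hs, u⟫ + ⟪T u, hs⟫)) * t
        + (1/2) * ⟪T u, u⟫ * t^2 + (M/6) * ‖hs + t • u‖^3 := by
  unfold model
  rw [map_add, map_smul]
  simp only [inner_add_left, inner_add_right, inner_smul_left, inner_smul_right,
    RCLike.conj_to_real, conj_trivial]
  ring

lemma norm_add_smul_sq {n : ℕ} (hs u : EuclideanSpace ℝ (Fin n)) (t : ℝ) :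
    ‖hs + t • u‖^2 = ‖hs‖^2 + 2 * ⟪hs, u⟫ * t + t^2 * ‖u‖^2 := by
  rw [norm_add_sq_real, inner_smul_right, norm_smul]
  simp [mul_pow]
  ring

set_option maxHeartbeats 1000000 in
lemma second_order {n : ℕ} (S : Finset (Fin n)) (g : EuclideanSpace ℝ (Fin n))
    (T : EuclideanSpace ℝ (Fin n) →L[ℝ] EuclideanSpace ℝ (Fin n)) (M : ℝ) (hM : 0 ≤ M)
    (hs : EuclideanSpace ℝ (Fin n)) (hsupp : ∀ i ∉ S, hs i = 0)
    (hmin : ∀ h : EuclideanSpace ℝ (Fin n), (∀ i ∉ S, h i = 0) →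
      model g T M hs ≤ model g T M h)
    (u : EuclideanSpace ℝ (Fin n)) (husupp : ∀ i ∉ S, u i = 0) :
    0 ≤ ⟪T u, u⟫ + (M/2) * ‖hs‖ * ‖u‖^2 := by
  obtain ⟨r, hrdef⟩ : ∃ r, ‖hs‖ = r := ⟨_, rfl⟩
  obtain ⟨b, hbdef⟩ : ∃ b, ‖u‖ = b := ⟨_, rfl⟩
  obtain ⟨c, hcdef⟩ : ∃ c, (⟪hs, u⟫ : ℝ) = c := ⟨_, rfl⟩
  obtain ⟨q, hqdef⟩ : ∃ q, (⟪T u, u⟫ : ℝ) = q := ⟨_, rfl⟩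
  obtain ⟨C1, hC1def⟩ : ∃ C1, (⟪g, u⟫ : ℝ) + (1/2) * ((⟪T hs, u⟫ : ℝ) + ⟪T u, hs⟫) = C1 :=
    ⟨_, rfl⟩
  rw [hrdef, hbdef, hqdef]
  have hsubs : ∀ t : ℝ, ∀ i ∉ S, (hs + t • u) i = 0 := by
    intro t i hi
    have : (hs + t • u) i = hs i + t * u i := rfl
    rw [this, hsupp i hi, husupp i hi]; ring
  have hb0 : 0 ≤ b := hbdef ▸ norm_nonneg u
  have hr0 : 0 ≤ r := hrdef ▸ norm_nonneg hs
  have hnormsq : ∀ t : ℝ, ‖hs + t • u‖^2 = r^2 + 2*c*t + t^2*b^2 := by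
    intro t
    rw [norm_add_smul_sq, hrdef, hbdef, hcdef]
  have key : ∀ t : ℝ,
      0 ≤ C1 * t + (1/2) * q * t^2 + (M/6) * (‖hs + t • u‖^3 - r^3) := by
    intro t
    have h1 := hmin (hs + t • u) (hsubs t)
    rw [model_expand] at h1
    unfold model at h1
    rw [hC1def, hqdef, hrdef] at h1
    linarith
  by_cases hhs : hs = 0
  · -- r = 0 case
    have hr : r = 0 := by rw [← hrdef, hhs, norm_zero]
    have key2 : ∀ t : ℝ, 0 < t → 0 ≤ t^2 * q + (M/3) * t^3 * b^3 := by
      intro t ht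
      have k1 := key t
      have k2 := key (-t)
      have e1 : ‖hs + t • u‖ = t * b := by
        rw [hhs, zero_add, norm_smul, hbdef]; simp [abs_of_pos ht]
      have e2 : ‖hs + (-t) • u‖ = t * b := by
        rw [hhs, zero_add, norm_smul, hbdef]; simp [abs_of_pos ht]
      rw [e1, hr] at k1
      rw [e2, hr] at k2
      nlinarith [k1, k2]
    rw [hr]
    by_contra hq
    push_neg at hq
    have hq' : q < 0 := by nlinarith
    have hD : 0 ≤ (M/3) * b^3 := by positivity
    have hD1 : (0:ℝ) < (M/3) * b^3 + 1 := by linarith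
    have ht : 0 < -q / ((M/3) * b^3 + 1) := div_pos (by linarith) hD1
    have hlt : ((M/3) * b^3) * (-q / ((M/3) * b^3 + 1)) < -q := by
      rw [mul_div_assoc', div_lt_iff₀ hD1]
      nlinarith
    have hk := key2 _ ht
    nlinarith [mul_pos ht ht, mul_pos (mul_pos ht ht) ht]
  · -- r > 0 case
    have hr : 0 < r := by rw [← hrdef]; exact norm_pos_iff.mpr hhs
    have hψeq : ∀ t : ℝ, model g T M (hs + t • u)
        = (⟪g, hs⟫ + (1/2) * ⟪T hs, hs⟫) + C1 * t + ((1/2) * q) * t^2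
          + (M/6) * (Real.sqrt (r^2 + 2*c*t + t^2*b^2) * (r^2 + 2*c*t + t^2*b^2)) := by
      intro t
      rw [model_expand]
      rw [← hnormsq t, Real.sqrt_sq (norm_nonneg _), hC1def, hqdef]
      ring
    have hstat : C1 = -(M/2) * r * c := by
      have hφ : HasDerivAt (fun t : ℝ => r^2 + 2*c*t + t^2*b^2) (2*c) 0 := by
        have h1 : HasDerivAt (fun t : ℝ => r^2 + 2*c*t + t^2*b^2)
            (0 + 2*c*1 + (↑2*(0:ℝ)^(2-1))*b^2) 0 :=
          ((hasDerivAt_const 0 (r^2)).add (((hasDerivAt_id 0)).const_mul (2*c))).add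
            ((hasDerivAt_pow 2 0).mul_const (b^2))
        simpa using h1
      have hne : (r^2 + 2*c*0 + 0^2*b^2) ≠ 0 := by nlinarith
      have hcube : HasDerivAt
          (fun t : ℝ => Real.sqrt (r^2 + 2*c*t + t^2*b^2) * (r^2 + 2*c*t + t^2*b^2))
          (3*r*c) 0 := by
        have hsq := hφ.sqrt (by simpa using hne)
        have hmul := hsq.mul hφ
        refine hmul.congr_deriv ?_
        have h0 : Real.sqrt (r^2 + 2*c*0 + 0^2*b^2) = r := by
          rw [show r^2 + 2*c*0 + 0^2*b^2 = r^2 by ring, Real.sqrt_sq hr.le]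
        rw [h0]
        field_simp
        ring
      have hD : HasDerivAt (fun t : ℝ => model g T M (hs + t • u)) (C1 + (M/6) * (3*r*c)) 0 := by
        have hpoly : HasDerivAt
            (fun t : ℝ => ((⟪g, hs⟫ : ℝ) + (1/2) * ⟪T hs, hs⟫) + C1 * t + ((1/2)*q) * t^2)
            (C1 + ((1/2)*q) * (2*0)) 0 := by
          have := ((hasDerivAt_const (0:ℝ) ((⟪g, hs⟫ : ℝ) + (1/2) * ⟪T hs, hs⟫)).add
            ((hasDerivAt_id (0:ℝ)).const_mul C1)).add
            (((hasDerivAt_pow 2 (0:ℝ))).const_mul ((1/2)*q))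
          exact this.congr_deriv (by norm_num)
        have htot := hpoly.add (hcube.const_mul (M/6))
        have h2 : HasDerivAt
            (fun t : ℝ => ((⟪g, hs⟫ : ℝ) + (1/2) * ⟪T hs, hs⟫) + C1 * t + ((1/2)*q) * t^2
              + (M/6) * (Real.sqrt (r^2 + 2*c*t + t^2*b^2) * (r^2 + 2*c*t + t^2*b^2)))
            (C1 + (M/6) * (3*r*c)) 0 := by
          exact htot.congr_deriv (by ring)
        exact h2.congr_of_eventuallyEq (Filter.Eventually.of_forall fun t => (hψeq t))
      have hloc : IsLocalMin (fun t : ℝ => model g T M (hs + t • u)) 0 :=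
        Filter.Eventually.of_forall fun t => by
          simpa using hmin (hs + t • u) (hsubs t)
      have hzero := hloc.hasDerivAt_eq_zero hD
      linarith
    -- key polynomial inequality
    have keyP : ∀ t : ℝ,
        0 ≤ r*q*t^2 + (M/2)*r^2*t^2*b^2 + (M/6)*(2*c*t+t^2*b^2)^2 := by
      intro t
      have h1 := key t
      rw [hstat] at h1
      obtain ⟨s, hsdef⟩ : ∃ s, ‖hs + t • u‖ = s := ⟨_, rfl⟩
      rw [hsdef] at h1
      have hs0 : 0 ≤ s := hsdef ▸ norm_nonneg _
      have hs2 : s^2 = r^2 + 2*c*t + t^2*b^2 := by rw [← hsdef]; exact hnormsq t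
      clear hsdef hψeq hstat key hmin hsubs hnormsq hsupp husupp hC1def hqdef hcdef hbdef hrdef hhs
      have hA : 2*r*s^3 ≤ s^4 + r^2*s^2 := by nlinarith [sq_nonneg (s*(s-r))]
      have hB : s^4 + r^2*s^2
          = 2*r^4 + 3*r^2*(2*c*t+t^2*b^2) + (2*c*t+t^2*b^2)^2 := by
        rw [show s^4 + r^2*s^2 = (s^2)^2 + r^2*(s^2) by ring, hs2]
        ring
      have h1' : 0 ≤ -(M*r^2*c*t) + r*q*t^2 + (M/3)*(r*s^3) - (M/3)*r^4 := by
        nlinarith [mul_nonneg (by linarith : (0:ℝ) ≤ 2*r) h1]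
      have hAB : 2*r*s^3 ≤ 2*r^4 + 3*r^2*(2*c*t+t^2*b^2) + (2*c*t+t^2*b^2)^2 := hB ▸ hA
      have hC' := mul_le_mul_of_nonneg_left hAB (by linarith : (0:ℝ) ≤ M/6)
      nlinarith [h1', hC']
    by_cases hc : c = 0
    · by_contra hX
      push_neg at hX
      have hX' : r*q + (M/2)*r^2*b^2 < 0 := by nlinarith
      have hD : 0 ≤ (M/6) * b^4 := by positivity
      have hD1 : (0:ℝ) < (M/6) * b^4 + 1 := by linarith
      have hY : 0 < -(r*q + (M/2)*r^2*b^2) := by linarith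
      obtain ⟨t, htdef⟩ : ∃ t, Real.sqrt (-(r*q + (M/2)*r^2*b^2) / ((M/6) * b^4 + 1)) = t :=
        ⟨_, rfl⟩
      have ht2 : t^2 = -(r*q + (M/2)*r^2*b^2) / ((M/6) * b^4 + 1) := by
        rw [← htdef]; exact Real.sq_sqrt (by positivity)
      have ht2pos : 0 < t^2 := by rw [ht2]; positivity
      have hlt : ((M/6) * b^4) * t^2 < -(r*q + (M/2)*r^2*b^2) := by
        rw [ht2, mul_div_assoc', div_lt_iff₀ hD1]
        nlinarith
      have hk := keyP t
      rw [hc] at hk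
      nlinarith [mul_pos ht2pos (by linarith : (0:ℝ) < -(r*q + (M/2)*r^2*b^2) - ((M/6)*b^4)*t^2)]
    · have hu : u ≠ 0 := by
        intro h0
        apply hc
        rw [← hcdef, h0, inner_zero_right]
      have hb : 0 < b := by rw [← hbdef]; exact norm_pos_iff.mpr hu
      have hε : 2*c*(-2*c/b^2) + (-2*c/b^2)^2*b^2 = 0 := by
        field_simp
        ring
      have ht2pos : 0 < (-2*c/b^2)^2 := by
        have hne : (-2*c/b^2) ≠ 0 := div_ne_zero (by intro h; apply hc; linarith) (by positivity)
        positivity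
      have hk := keyP (-2*c/b^2)
      rw [hε] at hk
      by_contra hX
      push_neg at hX
      nlinarith [mul_pos (mul_pos hr ht2pos) (by linarith : (0:ℝ) < -(q + (M/2)*r*b^2))]

set_option maxHeartbeats 1000000 in
/-- Smallest-eigenvalue bound at the new iterate: if `h*` globally minimizes the
coordinate-restricted cubic model with `M ≥ L₂` over vectors supported on `S`, then every
eigenvalue `λ` of `∇²f(x + h*)` satisfies
`−λ ≤ (3M/2)‖h*‖ + ‖∇²f(x) − ∇²f(x)_[S]‖`. -/
theorem new_min_eigenvalue_bound {n : ℕ} (f : EuclideanSpace ℝ (Fin n) → ℝ) (L₂ M : ℝ)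
    (hL₂ : 0 ≤ L₂) (hM : L₂ ≤ M)
    (hf : ContDiff ℝ 2 f)
    (hLip : ∀ x y : EuclideanSpace ℝ (Fin n),
      ‖fderiv ℝ (fun z => fderiv ℝ f z) x - fderiv ℝ (fun z => fderiv ℝ f z) y‖ ≤ L₂ * ‖x - y‖)
    (S : Finset (Fin n)) (x hs : EuclideanSpace ℝ (Fin n))
    (hsupp : ∀ i ∉ S, hs i = 0)
    (hmin : ∀ h : EuclideanSpace ℝ (Fin n), (∀ i ∉ S, h i = 0) →
      ⟪restrict S (gradient f x), hs⟫
          + (1 / 2) * ⟪(Matrix.toEuclideanCLM (𝕜 := ℝ) (restrictM S (hessMat f x))) hs, hs⟫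
          + (M / 6) * ‖hs‖ ^ 3
        ≤ ⟪restrict S (gradient f x), h⟫
          + (1 / 2) * ⟪(Matrix.toEuclideanCLM (𝕜 := ℝ) (restrictM S (hessMat f x))) h, h⟫
          + (M / 6) * ‖h‖ ^ 3)
    (hherm : (hessMat f (x + hs)).IsHermitian) :
    ∀ i, -(hherm.eigenvalues i)
      ≤ (3 * M / 2) * ‖hs‖
        + ‖Matrix.toEuclideanCLM (𝕜 := ℝ) (hessMat f x - restrictM S (hessMat f x))‖ := by
  intro i
  have hM0 : 0 ≤ M := le_trans hL₂ hM
  have hr0 : (0:ℝ) ≤ ‖hs‖ := norm_nonneg hs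
  -- the eigenvector
  have hv1 : ‖(hherm.eigenvectorBasis i : EuclideanSpace ℝ (Fin n))‖ = 1 :=
    hherm.eigenvectorBasis.orthonormal.1 i
  obtain ⟨v, hvdef⟩ : ∃ v : EuclideanSpace ℝ (Fin n), (hherm.eigenvectorBasis i) = v := ⟨_, rfl⟩
  rw [hvdef] at hv1
  have hEig : (Matrix.toEuclideanCLM (𝕜 := ℝ) (hessMat f (x + hs))) v
      = hherm.eigenvalues i • v := by
    ext j
    have h1 := congrFun (hherm.mulVec_eigenvectorBasis i) j
    rw [hvdef] at h1
    exact h1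
  have hlam : ⟪(Matrix.toEuclideanCLM (𝕜 := ℝ) (hessMat f (x + hs))) v, v⟫
      = hherm.eigenvalues i := by
    rw [hEig, real_inner_smul_left, real_inner_self_eq_norm_sq, hv1]
    ring
  -- Lipschitz step
  have hlip : |(⟪(Matrix.toEuclideanCLM (𝕜 := ℝ) (hessMat f (x + hs))) v, v⟫ : ℝ)
      - ⟪(Matrix.toEuclideanCLM (𝕜 := ℝ) (hessMat f x)) v, v⟫| ≤ L₂ * ‖hs‖ := by
    rw [inner_hessMat_eq, inner_hessMat_eq]
    have h1 : (fderiv ℝ (fun z => fderiv ℝ f z) (x + hs) v) v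
        - (fderiv ℝ (fun z => fderiv ℝ f z) x v) v
        = ((fderiv ℝ (fun z => fderiv ℝ f z) (x + hs)
            - fderiv ℝ (fun z => fderiv ℝ f z) x) v) v := by
      simp [ContinuousLinearMap.sub_apply]
    rw [h1]
    have h2 := ContinuousLinearMap.le_opNorm
      ((fderiv ℝ (fun z => fderiv ℝ f z) (x + hs) - fderiv ℝ (fun z => fderiv ℝ f z) x) v) v
    have h3 := ContinuousLinearMap.le_opNorm
      (fderiv ℝ (fun z => fderiv ℝ f z) (x + hs) - fderiv ℝ (fun z => fderiv ℝ f z) x) v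
    have h4 := hLip (x + hs) x
    rw [add_sub_cancel_left] at h4
    rw [← Real.norm_eq_abs]
    calc ‖((fderiv ℝ (fun z => fderiv ℝ f z) (x + hs)
            - fderiv ℝ (fun z => fderiv ℝ f z) x) v) v‖
        ≤ ‖(fderiv ℝ (fun z => fderiv ℝ f z) (x + hs)
            - fderiv ℝ (fun z => fderiv ℝ f z) x) v‖ * ‖v‖ := h2
      _ ≤ (‖fderiv ℝ (fun z => fderiv ℝ f z) (x + hs)
            - fderiv ℝ (fun z => fderiv ℝ f z) x‖ * ‖v‖) * ‖v‖ := by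
          apply mul_le_mul_of_nonneg_right _ (norm_nonneg v)
          exact h3
      _ ≤ (L₂ * ‖hs‖ * ‖v‖) * ‖v‖ := by
          apply mul_le_mul_of_nonneg_right _ (norm_nonneg v)
          exact mul_le_mul_of_nonneg_right h4 (norm_nonneg v)
      _ = L₂ * ‖hs‖ := by rw [hv1]; ring
  -- splitting off the restricted matrix
  have hsplit : (⟪(Matrix.toEuclideanCLM (𝕜 := ℝ) (hessMat f x)) v, v⟫ : ℝ)
      = ⟪(Matrix.toEuclideanCLM (𝕜 := ℝ) (restrictM S (hessMat f x))) v, v⟫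
        + ⟪(Matrix.toEuclideanCLM (𝕜 := ℝ)
            (hessMat f x - restrictM S (hessMat f x))) v, v⟫ := by
    rw [map_sub]
    rw [ContinuousLinearMap.sub_apply, inner_sub_left]
    ring
  -- bound on the residual term
  have hres : -‖Matrix.toEuclideanCLM (𝕜 := ℝ) (hessMat f x - restrictM S (hessMat f x))‖
      ≤ (⟪(Matrix.toEuclideanCLM (𝕜 := ℝ)
          (hessMat f x - restrictM S (hessMat f x))) v, v⟫ : ℝ) := by
    have h1 := abs_real_inner_le_norm
      ((Matrix.toEuclideanCLM (𝕜 := ℝ) (hessMat f x - restrictM S (hessMat f x))) v) v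
    have h2 := ContinuousLinearMap.le_opNorm
      (Matrix.toEuclideanCLM (𝕜 := ℝ) (hessMat f x - restrictM S (hessMat f x))) v
    rw [abs_le] at h1
    have h3 : ‖(Matrix.toEuclideanCLM (𝕜 := ℝ)
        (hessMat f x - restrictM S (hessMat f x))) v‖ * ‖v‖
        ≤ ‖Matrix.toEuclideanCLM (𝕜 := ℝ) (hessMat f x - restrictM S (hessMat f x))‖ := by
      calc _ ≤ (‖Matrix.toEuclideanCLM (𝕜 := ℝ)
            (hessMat f x - restrictM S (hessMat f x))‖ * ‖v‖) * ‖v‖ :=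
              mul_le_mul_of_nonneg_right h2 (norm_nonneg v)
        _ = _ := by rw [hv1]; ring
    linarith [h1.1, h1.2]
  -- second order condition applied to restrict S v
  have hso := second_order S (restrict S (gradient f x))
    (Matrix.toEuclideanCLM (𝕜 := ℝ) (restrictM S (hessMat f x))) M hM0 hs hsupp
    (fun h hh => hmin h hh) (restrict S v) (restrict_support S v)
  have hrestr := inner_restrictM_eq S (hessMat f x) v
  have hnr : ‖restrict S v‖ ≤ 1 := by rw [← hv1]; exact norm_restrict_le S v
  have hnr0 : (0:ℝ) ≤ ‖restrict S v‖ := norm_nonneg _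
  have hMain : -(M/2) * ‖hs‖
      ≤ (⟪(Matrix.toEuclideanCLM (𝕜 := ℝ) (restrictM S (hessMat f x))) v, v⟫ : ℝ) := by
    rw [hrestr]
    have hsq : (0:ℝ) ≤ 1 - ‖restrict S v‖^2 := by nlinarith
    have hfac : 0 ≤ (M/2) * ‖hs‖ * (1 - ‖restrict S v‖^2) :=
      mul_nonneg (mul_nonneg (by linarith) hr0) hsq
    nlinarith [hso, hfac]
  rw [abs_le] at hlip
  have hML : L₂ * ‖hs‖ ≤ M * ‖hs‖ := mul_le_mul_of_nonneg_right hM hr0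
  linarith [hlip.1, hlam, hsplit, hres, hMain, hML]
end
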